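/- arXiv:1708.08131 — 4 statements merged into one kernel-verified Lean document; each statement's English description precedes it below -/
import Mathlib

section
/- Let T > 0, d ≥ 1, α = (α₁,…,α_d) ∈ (0,1]^d, and let f : [0,T] × ℂ^d → ℂ^d be continuous with each component satisfying a Lipschitz condition in the second variable with constant L. Then for every x₀ ∈ ℂ^d, the Volterra integral equation x_i(t) = x_i⁰ + (1/Γ(α_i)) ∫₀ᵗ (t−s)^{α_i−1} f_i(s, x(s)) ds, i = 1,…,d, has a unique continuous solution x : [0,T] → ℂ^d. -/
set_option maxHeartbeats 1000000


open MeasureTheory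

namespace Vol0
open intervalIntegral Set Function




lemma kerInt {a : ℝ} (ha : 0 < a) (t : ℝ) :
    IntervalIntegrable (fun s => (t - s) ^ (a - 1)) volume 0 t := by
  have h := (intervalIntegrable_rpow' (a := t) (b := 0) (r := a - 1)
    (by linarith)).comp_sub_left t
  simpa using h

lemma kerIntC {a : ℝ} (ha : 0 < a) (t : ℝ) {g : ℝ → ℂ} (hg : Continuous g) :
    IntervalIntegrable (fun s => ((t - s) ^ (a - 1) : ℝ) • g s) volume 0 t := by
  have h1 : IntervalIntegrable (fun s => (((t - s) ^ (a - 1) : ℝ) : ℂ)) volume 0 t :=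
    ⟨(kerInt ha t).1.ofReal, (kerInt ha t).2.ofReal⟩
  have h2 := h1.mul_continuousOn hg.continuousOn
  simpa [Complex.real_smul] using h2

lemma kerIntR {a : ℝ} (ha : 0 < a) (t : ℝ) {g : ℝ → ℝ} (hg : Continuous g) :
    IntervalIntegrable (fun s => (t - s) ^ (a - 1) * g s) volume 0 t :=
  (kerInt ha t).mul_continuousOn hg.continuousOn

lemma kerIntC' {a : ℝ} (ha : 0 < a) (c A B : ℝ) {g : ℝ → ℂ} (hg : Continuous g) :
    IntervalIntegrable (fun r => (r ^ (a - 1) : ℝ) • g (c - r)) volume A B := by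
  have h1 : IntervalIntegrable (fun r => ((r ^ (a - 1) : ℝ) : ℂ)) volume A B :=
    ⟨(intervalIntegrable_rpow' (by linarith)).1.ofReal,
     (intervalIntegrable_rpow' (by linarith)).2.ofReal⟩
  have hcg : Continuous (fun r : ℝ => g (c - r)) := hg.comp (continuous_const.sub continuous_id)
  have h2 := h1.mul_continuousOn hcg.continuousOn
  simpa [Complex.real_smul] using h2

lemma rpow_sub_le {a : ℝ} (ha : 0 < a) (ha1 : a ≤ 1) {x y : ℝ} (hx : 0 ≤ x) (hxy : x ≤ y) :
    y ^ a - x ^ a ≤ (y - x) ^ a := by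
  have hy : 0 ≤ y := hx.trans hxy
  have hyx : 0 ≤ y - x := by linarith
  have h := NNReal.rpow_add_le_add_rpow x.toNNReal (y - x).toNNReal ha.le ha1
  rw [← Real.toNNReal_add hx hyx, add_sub_cancel] at h
  have h2 := NNReal.coe_le_coe.2 h
  push_cast [Real.coe_toNNReal _ hy, Real.coe_toNNReal _ hx, Real.coe_toNNReal _ hyx] at h2
  linarith

lemma frac_sub {a : ℝ} (t : ℝ) (g : ℝ → ℂ) :
    (∫ s in (0:ℝ)..t, ((t - s) ^ (a - 1) : ℝ) • g s)
      = ∫ r in (0:ℝ)..t, (r ^ (a - 1) : ℝ) • g (t - r) := by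
  have h := integral_comp_sub_left (a := 0) (b := t)
    (fun x => (x ^ (a - 1) : ℝ) • g (t - x)) t
  simpa [sub_sub_cancel] using h

lemma frac_subR (t : ℝ) (g : ℝ → ℝ) :
    (∫ s in (0:ℝ)..t, g (t - s)) = ∫ r in (0:ℝ)..t, g r := by
  have h := integral_comp_sub_left (a := 0) (b := t) g t
  simpa using h



-- kerPow: generic power-kernel integrability
lemma kerPow {a : ℝ} (ha : 0 < a) (A B : ℝ) {G : ℝ → ℂ} (hG : Continuous G) :
    IntervalIntegrable (fun r => (r ^ (a - 1) : ℝ) • G r) volume A B := by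
  have h1 : IntervalIntegrable (fun r => ((r ^ (a - 1) : ℝ) : ℂ)) volume A B :=
    ⟨(intervalIntegrable_rpow' (by linarith)).1.ofReal,
     (intervalIntegrable_rpow' (by linarith)).2.ofReal⟩
  simpa [Complex.real_smul] using h1.mul_continuousOn hG.continuousOn

lemma kerIntC'2 {a : ℝ} (ha : 0 < a) (c A B : ℝ) {g : ℝ → ℂ} (hg : Continuous g) :
    IntervalIntegrable (fun r => (r ^ (a - 1) : ℝ) • g (c - r)) volume A B :=
  kerPow ha A B (hg.comp (continuous_const.sub continuous_id))


lemma gamma_tail {a c : ℝ} (ha : 0 < a) (hc : 0 ≤ c) :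
    (∫ u in (0:ℝ)..c, u ^ (a - 1) * Real.exp (-u)) ≤ Real.Gamma a := by
  rw [Real.Gamma_eq_integral ha, intervalIntegral.integral_of_le hc]
  have hint : IntegrableOn (fun x => Real.exp (-x) * x ^ (a - 1)) (Ioi 0) volume :=
    Real.GammaIntegral_convergent ha
  have h1 : (∫ u in Ioc (0:ℝ) c, u ^ (a - 1) * Real.exp (-u))
      = ∫ u in Ioc (0:ℝ) c, Real.exp (-u) * u ^ (a - 1) := by
    simp_rw [mul_comm]
  rw [h1]
  apply setIntegral_mono_set hint
  · filter_upwards [ae_restrict_mem measurableSet_Ioi] with u hu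
    have hu' : 0 < u := mem_Ioi.mp hu
    positivity
  · exact HasSubset.Subset.eventuallyLE Ioc_subset_Ioi_self

lemma key_bound {a lam t : ℝ} (ha : 0 < a) (hlam : 0 < lam) (ht : 0 ≤ t) :
    (∫ s in (0:ℝ)..t, (t - s) ^ (a - 1) * Real.exp (lam * s))
      ≤ Real.exp (lam * t) * (Real.Gamma a * lam ^ (-a)) := by
  -- substitute r = t - s
  have h1 : (∫ s in (0:ℝ)..t, (t - s) ^ (a - 1) * Real.exp (lam * s))
      = ∫ r in (0:ℝ)..t, r ^ (a - 1) * Real.exp (lam * (t - r)) := by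
    have h := integral_comp_sub_left (a := 0) (b := t)
      (fun x => x ^ (a - 1) * Real.exp (lam * (t - x))) t
    simpa [sub_sub_cancel] using h
  rw [h1]
  have h2 : (∫ r in (0:ℝ)..t, r ^ (a - 1) * Real.exp (lam * (t - r)))
      = Real.exp (lam * t) * ∫ r in (0:ℝ)..t, r ^ (a - 1) * Real.exp (-(lam * r)) := by
    rw [← intervalIntegral.integral_const_mul]
    apply intervalIntegral.integral_congr
    intro r _
    show r ^ (a - 1) * Real.exp (lam * (t - r))
        = Real.exp (lam * t) * (r ^ (a - 1) * Real.exp (-(lam * r)))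
    rw [show lam * (t - r) = lam * t + -(lam * r) by ring, Real.exp_add]
    ring
  rw [h2]
  have hexp : (0:ℝ) ≤ Real.exp (lam * t) := (Real.exp_pos _).le
  apply mul_le_mul_of_nonneg_left _ hexp
  -- substitute u = lam * r
  have h3 : (∫ r in (0:ℝ)..t, r ^ (a - 1) * Real.exp (-(lam * r)))
      = lam ^ (1 - a) * (lam⁻¹ * ∫ u in (0:ℝ)..(lam * t), u ^ (a - 1) * Real.exp (-u)) := by
    have h := integral_comp_mul_left (a := 0) (b := t)
      (fun u => u ^ (a - 1) * Real.exp (-u)) (c := lam) hlam.ne'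
    simp only [mul_zero, smul_eq_mul] at h
    rw [← h, ← intervalIntegral.integral_const_mul]
    apply intervalIntegral.integral_congr
    intro r hr
    rw [uIcc_of_le ht] at hr
    have hrnn : 0 ≤ r := hr.1
    show r ^ (a - 1) * Real.exp (-(lam * r))
        = lam ^ (1 - a) * ((lam * r) ^ (a - 1) * Real.exp (-(lam * r)))
    rw [Real.mul_rpow hlam.le hrnn]
    have hone : lam ^ (1 - a) * lam ^ (a - 1) = 1 := by
      rw [← Real.rpow_add hlam]; norm_num
    rw [show lam ^ (1 - a) * (lam ^ (a - 1) * r ^ (a - 1) * Real.exp (-(lam * r)))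
        = (lam ^ (1 - a) * lam ^ (a - 1)) * (r ^ (a - 1) * Real.exp (-(lam * r))) from by ring,
      hone, one_mul]
  rw [h3]
  have h4 : (∫ u in (0:ℝ)..(lam * t), u ^ (a - 1) * Real.exp (-u)) ≤ Real.Gamma a :=
    gamma_tail ha (by positivity)
  have h5 : lam ^ (1 - a) * lam⁻¹ = lam ^ (-a) := by
    rw [← Real.rpow_neg_one lam, ← Real.rpow_add hlam]
    congr 1; ring
  calc lam ^ (1 - a) * (lam⁻¹ * ∫ u in (0:ℝ)..(lam * t), u ^ (a - 1) * Real.exp (-u))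
      = (lam ^ (1 - a) * lam⁻¹) * ∫ u in (0:ℝ)..(lam * t), u ^ (a - 1) * Real.exp (-u) := by ring
    _ ≤ (lam ^ (1 - a) * lam⁻¹) * Real.Gamma a := by
        apply mul_le_mul_of_nonneg_left h4 (by positivity)
    _ = Real.Gamma a * lam ^ (-a) := by rw [h5]; ring



lemma frac_diff_bound {T a : ℝ} (ha : 0 < a) (ha1 : a ≤ 1) {g : ℝ → ℂ} (hg : Continuous g)
    {M eps del : ℝ}
    (hM : ∀ s ∈ Icc (0:ℝ) T, ‖g s‖ ≤ M)
    (hmod : ∀ x ∈ Icc (0:ℝ) T, ∀ y ∈ Icc (0:ℝ) T, |x - y| ≤ del → ‖g x - g y‖ ≤ eps)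
    {t t' : ℝ} (ht : t ∈ Icc 0 T) (ht' : t' ∈ Icc 0 T) (htt' : t ≤ t') (hdel : t' - t ≤ del) :
    ‖(∫ r in (0:ℝ)..t', (r ^ (a - 1) : ℝ) • g (t' - r))
      - ∫ r in (0:ℝ)..t, (r ^ (a - 1) : ℝ) • g (t - r)‖
      ≤ eps * T ^ a / a + M * (t' - t) ^ a / a := by
  obtain ⟨ht0, htT⟩ := ht
  obtain ⟨ht0', htT'⟩ := ht'
  have h00 : (0:ℝ) ∈ Icc (0:ℝ) T := ⟨le_refl 0, ht0.trans htT⟩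
  have heps0 : 0 ≤ eps := le_trans (norm_nonneg _)
    (hmod 0 h00 0 h00 (by simpa using le_trans (by linarith : (0:ℝ) ≤ t' - t) hdel))
  have hM0 : 0 ≤ M := le_trans (norm_nonneg _) (hM 0 h00)
  have hi1 : IntervalIntegrable (fun r => (r ^ (a-1) : ℝ) • g (t' - r)) volume 0 t :=
    kerIntC'2 ha t' 0 t hg
  have hi2 : IntervalIntegrable (fun r => (r ^ (a-1) : ℝ) • g (t' - r)) volume t t' :=
    kerIntC'2 ha t' t t' hg
  have hi3 : IntervalIntegrable (fun r => (r ^ (a-1) : ℝ) • g (t - r)) volume 0 t :=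
    kerIntC'2 ha t 0 t hg
  have hsplit : (∫ r in (0:ℝ)..t', (r ^ (a-1) : ℝ) • g (t' - r))
      = (∫ r in (0:ℝ)..t, (r ^ (a-1) : ℝ) • g (t' - r))
        + ∫ r in t..t', (r ^ (a-1) : ℝ) • g (t' - r) :=
    (intervalIntegral.integral_add_adjacent_intervals hi1 hi2).symm
  rw [hsplit]
  have hre : (∫ r in (0:ℝ)..t, (r ^ (a-1) : ℝ) • g (t' - r))
        + (∫ r in t..t', (r ^ (a-1) : ℝ) • g (t' - r))
        - (∫ r in (0:ℝ)..t, (r ^ (a-1) : ℝ) • g (t - r))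
      = (∫ r in (0:ℝ)..t, (r ^ (a-1) : ℝ) • (g (t' - r) - g (t - r)))
        + ∫ r in t..t', (r ^ (a-1) : ℝ) • g (t' - r) := by
    have hC : (∫ r in (0:ℝ)..t, (r ^ (a-1) : ℝ) • (g (t' - r) - g (t - r)))
        = (∫ r in (0:ℝ)..t, (r ^ (a-1) : ℝ) • g (t' - r))
          - ∫ r in (0:ℝ)..t, (r ^ (a-1) : ℝ) • g (t - r) := by
      rw [← intervalIntegral.integral_sub hi1 hi3]
      apply intervalIntegral.integral_congr
      intro r _
      simp [smul_sub]
    rw [hC]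
    ring
  rw [hre]
  -- piece A
  have hpA : ‖∫ r in (0:ℝ)..t, (r ^ (a-1) : ℝ) • (g (t' - r) - g (t - r))‖
      ≤ eps * T ^ a / a := by
    refine le_trans (intervalIntegral.norm_integral_le_integral_norm ht0) ?_
    have hmono : (∫ r in (0:ℝ)..t, ‖(r ^ (a-1) : ℝ) • (g (t' - r) - g (t - r))‖)
        ≤ ∫ r in (0:ℝ)..t, r ^ (a-1) * eps := by
      have hiD : IntervalIntegrable (fun r => (r ^ (a-1) : ℝ) • (g (t' - r) - g (t - r)))
          volume 0 t :=
        kerPow ha 0 t ((hg.comp (continuous_const.sub continuous_id)).sub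
          (hg.comp (continuous_const.sub continuous_id)))
      refine intervalIntegral.integral_mono_on ht0 hiD.norm
        ((intervalIntegrable_rpow' (a := 0) (b := t) (r := a - 1) (by linarith)).mul_const eps) ?_
      intro r hr
      rw [norm_smul, Real.norm_eq_abs, abs_of_nonneg (Real.rpow_nonneg hr.1 _)]
      apply mul_le_mul_of_nonneg_left _ (Real.rpow_nonneg hr.1 _)
      apply hmod (t' - r) ⟨by linarith [hr.1, hr.2], by linarith [hr.1, hr.2]⟩ (t - r)
        ⟨by linarith [hr.1, hr.2], by linarith [hr.1, hr.2]⟩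
      rw [show t' - r - (t - r) = t' - t by ring, abs_of_nonneg (by linarith)]
      exact hdel
    refine hmono.trans ?_
    rw [intervalIntegral.integral_mul_const, integral_rpow (Or.inl (by linarith)),
      show a - 1 + 1 = a by ring, Real.zero_rpow ha.ne']
    have hta : t ^ a ≤ T ^ a := Real.rpow_le_rpow ht0 htT ha.le
    rw [sub_zero, div_mul_eq_mul_div, mul_comm (t ^ a) eps]
    exact (div_le_div_iff_of_pos_right ha).2 (mul_le_mul_of_nonneg_left hta heps0)
  -- piece B
  have hpB : ‖∫ r in t..t', (r ^ (a-1) : ℝ) • g (t' - r)‖ ≤ M * (t' - t) ^ a / a := by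
    refine le_trans (intervalIntegral.norm_integral_le_integral_norm htt') ?_
    have hmono : (∫ r in t..t', ‖(r ^ (a-1) : ℝ) • g (t' - r)‖)
        ≤ ∫ r in t..t', r ^ (a-1) * M := by
      refine intervalIntegral.integral_mono_on htt' hi2.norm
        ((intervalIntegrable_rpow' (a := t) (b := t') (r := a - 1) (by linarith)).mul_const M) ?_
      intro r hr
      rw [norm_smul, Real.norm_eq_abs, abs_of_nonneg (Real.rpow_nonneg (le_trans ht0 hr.1) _)]
      apply mul_le_mul_of_nonneg_left _ (Real.rpow_nonneg (le_trans ht0 hr.1) _)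
      exact hM (t' - r) ⟨by linarith [hr.1, hr.2], by linarith [hr.1, hr.2]⟩
    refine hmono.trans ?_
    rw [intervalIntegral.integral_mul_const, integral_rpow (Or.inl (by linarith)),
      show a - 1 + 1 = a by ring]
    have h := rpow_sub_le ha ha1 ht0 htt'
    rw [div_mul_eq_mul_div, mul_comm _ M]
    exact (div_le_div_iff_of_pos_right ha).2 (mul_le_mul_of_nonneg_left h hM0)
  exact le_trans (norm_add_le _ _) (add_le_add hpA hpB)

lemma frac_cont {T a : ℝ} (hT : 0 < T) (ha : 0 < a) (ha1 : a ≤ 1) {g : ℝ → ℂ}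
    (hg : Continuous g) :
    ContinuousOn (fun t => ∫ s in (0:ℝ)..t, ((t - s) ^ (a - 1) : ℝ) • g s) (Icc 0 T) := by
  have heq : (fun t => ∫ s in (0:ℝ)..t, ((t - s) ^ (a - 1) : ℝ) • g s)
      = fun t => ∫ r in (0:ℝ)..t, (r ^ (a - 1) : ℝ) • g (t - r) := by
    funext t; exact frac_sub t g
  rw [heq]
  obtain ⟨M, hM⟩ := (isCompact_Icc (a := (0:ℝ)) (b := T)).exists_bound_of_continuousOn
    hg.continuousOn
  have hM0 : 0 ≤ M := le_trans (norm_nonneg _) (hM 0 ⟨le_refl 0, hT.le⟩)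
  have huc := (isCompact_Icc (a := (0:ℝ)) (b := T)).uniformContinuousOn_of_continuous hg.continuousOn
  rw [Metric.uniformContinuousOn_iff_le] at huc
  rw [Metric.continuousOn_iff]
  intro t0 ht0 eps heps
  have hTa : 0 < T ^ a := Real.rpow_pos_of_pos hT a
  set e1 := eps * a / (4 * (T ^ a + 1)) with he1def
  have he1 : 0 < e1 := by positivity
  obtain ⟨d1, hd1, hucd⟩ := huc e1 he1
  set d2 := (eps * a / (4 * (M + 1))) ^ a⁻¹ with hd2def
  have hd2 : 0 < d2 := Real.rpow_pos_of_pos (by positivity) _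
  refine ⟨min d1 d2, lt_min hd1 hd2, ?_⟩
  intro t1 ht1 hdist
  set u := min t1 t0 with hudef
  set v := max t1 t0 with hvdef
  have hu : u ∈ Icc (0:ℝ) T := ⟨le_min ht1.1 ht0.1, (min_le_left _ _).trans ht1.2⟩
  have hv : v ∈ Icc (0:ℝ) T := ⟨le_trans ht1.1 (le_max_left _ _), max_le ht1.2 ht0.2⟩
  have huv : u ≤ v := min_le_max
  have hvu : v - u = |t1 - t0| := by
    rw [hvdef, hudef, max_sub_min_eq_abs, abs_sub_comm]
  have habs : |t1 - t0| < min d1 d2 := by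
    rwa [Real.dist_eq] at hdist
  have hd1' : v - u ≤ d1 := by rw [hvu]; exact le_of_lt (lt_of_lt_of_le habs (min_le_left _ _))
  have hd2' : v - u ≤ d2 := by rw [hvu]; exact le_of_lt (lt_of_lt_of_le habs (min_le_right _ _))
  have hmod : ∀ x ∈ Icc (0:ℝ) T, ∀ y ∈ Icc (0:ℝ) T, |x - y| ≤ d1 → ‖g x - g y‖ ≤ e1 := by
    intro x hx y hy hxy
    have := hucd x hx y hy (by rwa [Real.dist_eq])
    rwa [dist_eq_norm] at this
  have hbd := frac_diff_bound (T := T) ha ha1 hg hM hmod hu hv huv hd1'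
  -- identify dist with the norm of the difference
  have hswap : dist (∫ r in (0:ℝ)..t1, (r ^ (a - 1) : ℝ) • g (t1 - r))
      (∫ r in (0:ℝ)..t0, (r ^ (a - 1) : ℝ) • g (t0 - r))
      = ‖(∫ r in (0:ℝ)..v, (r ^ (a - 1) : ℝ) • g (v - r))
        - ∫ r in (0:ℝ)..u, (r ^ (a - 1) : ℝ) • g (u - r)‖ := by
    rcases le_total t1 t0 with h | h
    · rw [hudef, hvdef, min_eq_left h, max_eq_right h, dist_eq_norm, norm_sub_rev]
    · rw [hudef, hvdef, min_eq_right h, max_eq_left h, dist_eq_norm]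
  rw [hswap]
  refine lt_of_le_of_lt (hbd.trans ?_) (by linarith : eps / 4 + eps / 4 < eps)
  have hA : e1 * T ^ a / a ≤ eps / 4 := by
    rw [he1def, div_le_div_iff₀ ha (by norm_num : (0:ℝ) < 4)]
    rw [div_mul_eq_mul_div, div_mul_eq_mul_div, div_le_iff₀ (by positivity : (0:ℝ) < 4 * (T ^ a + 1))]
    nlinarith [hTa, heps.le, ha.le]
  have hB : M * (v - u) ^ a / a ≤ eps / 4 := by
    have hvu0 : 0 ≤ v - u := by linarith
    have h1 : (v - u) ^ a ≤ d2 ^ a := Real.rpow_le_rpow hvu0 hd2' ha.le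
    have hX : (0:ℝ) ≤ eps * a / (4 * (M + 1)) := by positivity
    have h2 : d2 ^ a = eps * a / (4 * (M + 1)) := by
      rw [hd2def, ← Real.rpow_mul hX, inv_mul_cancel₀ ha.ne', Real.rpow_one]
    have h3 : M * (v - u) ^ a ≤ M * (eps * a / (4 * (M + 1))) :=
      mul_le_mul_of_nonneg_left (h1.trans_eq h2) hM0
    refine le_trans ((div_le_div_iff_of_pos_right ha).2 h3) ?_
    rw [div_le_div_iff₀ ha (by norm_num : (0:ℝ) < 4)]
    have key : M * (eps * a / (4 * (M + 1))) * 4 = eps * a * (M / (M + 1)) := by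
      field_simp
    rw [key]
    have h5 : M / (M + 1) ≤ 1 := by
      rw [div_le_one (by linarith : (0:ℝ) < M + 1)]; linarith
    nlinarith [mul_pos heps ha]
  exact add_le_add hA hB



variable {T : ℝ} {d : ℕ}

noncomputable def Pop (T : ℝ) (hT : (0:ℝ) ≤ T) (α : Fin d → ℝ)
    (f : ℝ → (Fin d → ℂ) → (Fin d → ℂ)) (x₀ : Fin d → ℂ)
    (u : C(Icc (0:ℝ) T, Fin d → ℂ)) : ℝ → Fin d → ℂ := fun t i =>
  x₀ i + (Real.Gamma (α i))⁻¹ •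
    ∫ s in (0:ℝ)..t, ((t - s) ^ (α i - 1) : ℝ) •
      f (projIcc 0 T hT s : ℝ) (u (projIcc 0 T hT s)) i

lemma G_cont (hT : (0:ℝ) ≤ T) {f : ℝ → (Fin d → ℂ) → (Fin d → ℂ)}
    (hf : ContinuousOn (fun p : ℝ × (Fin d → ℂ) => f p.1 p.2) (Icc 0 T ×ˢ univ))
    (u : C(Icc (0:ℝ) T, Fin d → ℂ)) :
    Continuous (fun s => f (projIcc 0 T hT s : ℝ) (u (projIcc 0 T hT s))) := by
  have h1 : Continuous (fun s : ℝ =>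
      (((projIcc 0 T hT s : ℝ), u (projIcc 0 T hT s)) : ℝ × (Fin d → ℂ))) :=
    (continuous_subtype_val.comp continuous_projIcc).prodMk
      (u.continuous.comp continuous_projIcc)
  exact hf.comp_continuous h1 fun s => ⟨(projIcc 0 T hT s).2, mem_univ _⟩

lemma Pop_contOn (hT : 0 < T) {α : Fin d → ℝ} (hα : ∀ i, α i ∈ Ioc (0:ℝ) 1)
    {f : ℝ → (Fin d → ℂ) → (Fin d → ℂ)}
    (hf : ContinuousOn (fun p : ℝ × (Fin d → ℂ) => f p.1 p.2) (Icc 0 T ×ˢ univ))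
    (x₀ : Fin d → ℂ) (u : C(Icc (0:ℝ) T, Fin d → ℂ)) :
    ContinuousOn (Pop T hT.le α f x₀ u) (Icc 0 T) := by
  have hG := G_cont hT.le hf u
  rw [continuousOn_pi]
  intro i
  apply ContinuousOn.add continuousOn_const
  exact (continuousOn_const (c := ((Real.Gamma (α i))⁻¹ : ℝ))).smul
    (frac_cont hT (hα i).1 (hα i).2 ((continuous_apply i).comp hG))



end Vol0

open Set Function

theorem stmt_0
    (T : ℝ) (hT : 0 < T) (d : ℕ) (hd : 1 ≤ d)
    (α : Fin d → ℝ) (hα : ∀ i, α i ∈ Set.Ioc (0 : ℝ) 1)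
    (f : ℝ → (Fin d → ℂ) → (Fin d → ℂ))
    (hf : ContinuousOn (fun p : ℝ × (Fin d → ℂ) => f p.1 p.2)
        (Set.Icc 0 T ×ˢ Set.univ))
    (L : ℝ) (hL : 0 < L)
    (hLip : ∀ i, ∀ t ∈ Set.Icc (0 : ℝ) T, ∀ y z : Fin d → ℂ,
        ‖f t y i - f t z i‖ ≤ L * ‖y - z‖)
    (x₀ : Fin d → ℂ) :
    ∃ x : ℝ → (Fin d → ℂ),
      (ContinuousOn x (Set.Icc 0 T) ∧
        ∀ t ∈ Set.Icc (0 : ℝ) T, ∀ i : Fin d,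
          x t i = x₀ i + (Real.Gamma (α i))⁻¹ •
            ∫ s in (0 : ℝ)..t, ((t - s) ^ (α i - 1) : ℝ) • f s (x s) i) ∧
      ∀ y : ℝ → (Fin d → ℂ),
        (ContinuousOn y (Set.Icc 0 T) ∧
          ∀ t ∈ Set.Icc (0 : ℝ) T, ∀ i : Fin d,
            y t i = x₀ i + (Real.Gamma (α i))⁻¹ •
              ∫ s in (0 : ℝ)..t, ((t - s) ^ (α i - 1) : ℝ) • f s (y s) i) →
        Set.EqOn y x (Set.Icc 0 T) := by
  classical
  haveI : Nonempty (Fin d) := Fin.pos_iff_nonempty.mp (by omega)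
  haveI : Nonempty C(↥(Icc (0:ℝ) T), Fin d → ℂ) := ⟨ContinuousMap.const _ 0⟩
  -- the Picard operator
  let P : C(↥(Icc (0:ℝ) T), Fin d → ℂ) → C(↥(Icc (0:ℝ) T), Fin d → ℂ) := fun u =>
    ⟨(Icc (0:ℝ) T).restrict (Vol0.Pop T hT.le α f x₀ u),
      (Vol0.Pop_contOn hT hα hf x₀ u).restrict⟩
  have hPapp : ∀ (u : C(↥(Icc (0:ℝ) T), Fin d → ℂ)) (p : ↥(Icc (0:ℝ) T)) (i : Fin d),
      (P u) p i = x₀ i + (Real.Gamma (α i))⁻¹ •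
        ∫ s in (0:ℝ)..(p:ℝ), (((p:ℝ) - s) ^ (α i - 1) : ℝ) •
          f (↑(projIcc 0 T hT.le s)) (u (projIcc 0 T hT.le s)) i :=
    fun u p i => rfl
  -- choice of the weight
  set amin : ℝ := Finset.univ.inf' Finset.univ_nonempty α with hamindef
  have hamin0 : 0 < amin := by
    rw [hamindef, Finset.lt_inf'_iff]
    exact fun i _ => (hα i).1
  have hamin_le : ∀ i, amin ≤ α i := fun i => Finset.inf'_le α (Finset.mem_univ i)
  set lam : ℝ := max 1 ((2*L) ^ amin⁻¹) with hlamdef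
  have hlam1 : (1:ℝ) ≤ lam := le_max_left _ _
  have hlam0 : (0:ℝ) < lam := lt_of_lt_of_le one_pos hlam1
  have hhalf : ∀ i, L * lam ^ (-(α i)) ≤ 1/2 := by
    intro i
    have h2L : (0:ℝ) < 2*L := by linarith
    have h1 : (2*L) ≤ lam ^ amin := by
      have hle : ((2*L) ^ amin⁻¹) ≤ lam := le_max_right _ _
      calc 2*L = ((2*L) ^ amin⁻¹) ^ amin := by
            rw [← Real.rpow_mul h2L.le, inv_mul_cancel₀ hamin0.ne', Real.rpow_one]
        _ ≤ lam ^ amin := Real.rpow_le_rpow (Real.rpow_nonneg h2L.le _) hle hamin0.le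
    have h2 : lam ^ amin ≤ lam ^ (α i) := Real.rpow_le_rpow_of_exponent_le hlam1 (hamin_le i)
    have h3 : 2*L ≤ lam ^ (α i) := h1.trans h2
    have hpos : 0 < lam ^ (α i) := Real.rpow_pos_of_pos hlam0 _
    rw [Real.rpow_neg hlam0.le, ← div_eq_mul_inv, div_le_iff₀ hpos]
    linarith
  have hGc : ∀ u : C(↥(Icc (0:ℝ) T), Fin d → ℂ),
      Continuous (fun s => f (↑(projIcc 0 T hT.le s)) (u (projIcc 0 T hT.le s))) :=
    fun u => Vol0.G_cont hT.le hf u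
  -- one-step estimate
  have hstep : ∀ (w w' : C(↥(Icc (0:ℝ) T), Fin d → ℂ)) (C : ℝ), 0 ≤ C →
      (∀ s : ↥(Icc (0:ℝ) T), ‖w s - w' s‖ ≤ C * Real.exp (lam * ↑s)) →
      ∀ t : ↥(Icc (0:ℝ) T), ‖(P w) t - (P w') t‖ ≤ (1/2) * C * Real.exp (lam * ↑t) := by
    intro w w' C hC hww t
    have ht0 : (0:ℝ) ≤ ↑t := t.2.1
    have htT : (↑t:ℝ) ≤ T := t.2.2
    have hexpt : (0:ℝ) < Real.exp (lam * ↑t) := Real.exp_pos _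
    rw [pi_norm_le_iff_of_nonneg (by positivity)]
    intro i
    have hai := (hα i).1
    have hΓ : 0 < Real.Gamma (α i) := Real.Gamma_pos_of_pos hai
    set g1 : ℝ → ℂ := fun s => f (↑(projIcc 0 T hT.le s)) (w (projIcc 0 T hT.le s)) i
      with hg1def
    set g2 : ℝ → ℂ := fun s => f (↑(projIcc 0 T hT.le s)) (w' (projIcc 0 T hT.le s)) i
      with hg2def
    have hg1c : Continuous g1 := (continuous_apply i).comp (hGc w)
    have hg2c : Continuous g2 := (continuous_apply i).comp (hGc w')
    have hint1 := Vol0.kerIntC hai (↑t) hg1c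
    have hint2 := Vol0.kerIntC hai (↑t) hg2c
    have hintD := Vol0.kerIntC hai (↑t : ℝ) (hg1c.sub hg2c)
    have hE : (∫ s in (0:ℝ)..(↑t:ℝ), (((↑t:ℝ) - s) ^ (α i - 1) : ℝ) • g1 s)
          - ∫ s in (0:ℝ)..(↑t:ℝ), (((↑t:ℝ) - s) ^ (α i - 1) : ℝ) • g2 s
        = ∫ s in (0:ℝ)..(↑t:ℝ), (((↑t:ℝ) - s) ^ (α i - 1) : ℝ) • (g1 s - g2 s) := by
      rw [← intervalIntegral.integral_sub hint1 hint2]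
      apply intervalIntegral.integral_congr
      intro s _
      simp [smul_sub]
    have e1 : (P w) t i = x₀ i + (Real.Gamma (α i))⁻¹ •
        ∫ s in (0:ℝ)..(↑t:ℝ), (((↑t:ℝ) - s) ^ (α i - 1) : ℝ) • g1 s := rfl
    have e2 : (P w') t i = x₀ i + (Real.Gamma (α i))⁻¹ •
        ∫ s in (0:ℝ)..(↑t:ℝ), (((↑t:ℝ) - s) ^ (α i - 1) : ℝ) • g2 s := rfl
    rw [Pi.sub_apply, e1, e2, add_sub_add_left_eq_sub, ← smul_sub, hE, norm_smul,
      Real.norm_eq_abs, abs_of_nonneg (inv_nonneg.2 hΓ.le)]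
    -- bound the integral
    have hbound : ‖∫ s in (0:ℝ)..(↑t:ℝ), (((↑t:ℝ) - s) ^ (α i - 1) : ℝ) • (g1 s - g2 s)‖
        ≤ ∫ s in (0:ℝ)..(↑t:ℝ), (((↑t:ℝ) - s) ^ (α i - 1)) * (L * C * Real.exp (lam * s)) := by
      refine le_trans (intervalIntegral.norm_integral_le_integral_norm ht0) ?_
      refine intervalIntegral.integral_mono_on ht0 hintD.norm
        (Vol0.kerIntR hai (↑t:ℝ)
          (continuous_const.mul (Real.continuous_exp.comp (continuous_const.mul continuous_id)))) ?_
      intro s hs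
      have hts : (0:ℝ) ≤ (↑t:ℝ) - s := by linarith [hs.2]
      rw [norm_smul, Real.norm_eq_abs, abs_of_nonneg (Real.rpow_nonneg hts _)]
      apply mul_le_mul_of_nonneg_left _ (Real.rpow_nonneg hts _)
      have hsI : s ∈ Icc (0:ℝ) T := ⟨hs.1, le_trans hs.2 htT⟩
      have hpr : (↑(projIcc 0 T hT.le s) : ℝ) = s := by
        rw [projIcc_of_mem hT.le hsI]
      have hlip := hLip i (↑(projIcc 0 T hT.le s)) (by rw [hpr]; exact hsI)
        (w (projIcc 0 T hT.le s)) (w' (projIcc 0 T hT.le s))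
      have h2 : ‖g1 s - g2 s‖ ≤ L * ‖w (projIcc 0 T hT.le s) - w' (projIcc 0 T hT.le s)‖ := by
        rw [hg1def, hg2def]
        simpa using hlip
      refine h2.trans ?_
      have h3 := hww (projIcc 0 T hT.le s)
      rw [hpr] at h3
      have h4 : ‖w (projIcc 0 T hT.le s) - w' (projIcc 0 T hT.le s)‖
          ≤ C * Real.exp (lam * s) := by
        refine le_trans ?_ h3
        apply le_of_eq
        congr 1
      calc L * ‖w (projIcc 0 T hT.le s) - w' (projIcc 0 T hT.le s)‖
          ≤ L * (C * Real.exp (lam * s)) := mul_le_mul_of_nonneg_left h4 hL.le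
        _ = L * C * Real.exp (lam * s) := by ring
    have hpull : (∫ s in (0:ℝ)..(↑t:ℝ), (((↑t:ℝ) - s) ^ (α i - 1)) * (L * C * Real.exp (lam * s)))
        = (L * C) * ∫ s in (0:ℝ)..(↑t:ℝ), (((↑t:ℝ) - s) ^ (α i - 1)) * Real.exp (lam * s) := by
      rw [← intervalIntegral.integral_const_mul]
      apply intervalIntegral.integral_congr
      intro s _
      ring
    have hkey := Vol0.key_bound hai hlam0 ht0
    calc (Real.Gamma (α i))⁻¹ * ‖∫ s in (0:ℝ)..(↑t:ℝ), (((↑t:ℝ) - s) ^ (α i - 1) : ℝ) • (g1 s - g2 s)‖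
        ≤ (Real.Gamma (α i))⁻¹ *
            ((L * C) * (Real.exp (lam * ↑t) * (Real.Gamma (α i) * lam ^ (-(α i))))) := by
          apply mul_le_mul_of_nonneg_left _ (inv_nonneg.2 hΓ.le)
          refine hbound.trans ?_
          rw [hpull]
          exact mul_le_mul_of_nonneg_left hkey (by positivity)
      _ = (L * lam ^ (-(α i))) * (C * Real.exp (lam * ↑t))
            * ((Real.Gamma (α i))⁻¹ * Real.Gamma (α i)) := by ring
      _ = (L * lam ^ (-(α i))) * (C * Real.exp (lam * ↑t)) := by
          rw [inv_mul_cancel₀ hΓ.ne', mul_one]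
      _ ≤ (1/2) * (C * Real.exp (lam * ↑t)) :=
          mul_le_mul_of_nonneg_right (hhalf i) (by positivity)
      _ = 1/2 * C * Real.exp (lam * ↑t) := by ring
  -- iterate estimate
  have hiter : ∀ (u v : C(↥(Icc (0:ℝ) T), Fin d → ℂ)) (n : ℕ) (t : ↥(Icc (0:ℝ) T)),
      ‖(P^[n] u) t - (P^[n] v) t‖ ≤ (1/2)^n * dist u v * Real.exp (lam * ↑t) := by
    intro u v n
    induction n with
    | zero =>
      intro t
      simp only [Function.iterate_zero, id_eq, pow_zero, one_mul]
      have h1 : ‖u t - v t‖ = dist (u t) (v t) := (dist_eq_norm _ _).symm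
      rw [h1]
      refine le_trans (ContinuousMap.dist_apply_le_dist t) ?_
      have hexp1 : (1:ℝ) ≤ Real.exp (lam * ↑t) := by
        rw [show (1:ℝ) = Real.exp 0 from (Real.exp_zero).symm]
        exact Real.exp_le_exp.2 (mul_nonneg (by linarith) t.2.1)
      nlinarith [dist_nonneg (x := u) (y := v)]
    | succ n ih =>
      intro t
      rw [Function.iterate_succ_apply', Function.iterate_succ_apply']
      have h := hstep (P^[n] u) (P^[n] v) ((1/2)^n * dist u v)
        (by positivity) (fun s => by
          have := ih s
          calc ‖(P^[n] u) s - (P^[n] v) s‖ ≤ (1/2)^n * dist u v * Real.exp (lam * ↑s) := this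
            _ = (1/2)^n * dist u v * Real.exp (lam * ↑s) := rfl) t
      refine h.trans ?_
      apply le_of_eq
      ring
  -- some iterate is a contraction
  obtain ⟨n, hn⟩ := exists_pow_lt_of_lt_one
    (show (0:ℝ) < (Real.exp (lam*T))⁻¹ by positivity) (by norm_num : (1/2:ℝ) < 1)
  have hK0 : (0:ℝ) ≤ (1/2:ℝ)^n * Real.exp (lam*T) := by positivity
  have hKlt : (1/2:ℝ)^n * Real.exp (lam*T) < 1 := by
    calc (1/2:ℝ)^n * Real.exp (lam*T) < (Real.exp (lam*T))⁻¹ * Real.exp (lam*T) :=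
          mul_lt_mul_of_pos_right hn (Real.exp_pos _)
      _ = 1 := inv_mul_cancel₀ (Real.exp_pos _).ne'
  set K : NNReal := ((1/2:ℝ)^n * Real.exp (lam*T)).toNNReal with hKdef
  have hlipP : LipschitzWith K (P^[n]) := by
    apply LipschitzWith.of_dist_le_mul
    intro u v
    rw [hKdef, Real.coe_toNNReal _ hK0]
    rw [ContinuousMap.dist_le (by positivity)]
    intro s
    rw [dist_eq_norm]
    refine (hiter u v n s).trans ?_
    have hexp : Real.exp (lam * ↑s) ≤ Real.exp (lam*T) :=
      Real.exp_le_exp.2 (mul_le_mul_of_nonneg_left s.2.2 (by linarith))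
    calc (1/2:ℝ)^n * dist u v * Real.exp (lam * ↑s)
        ≤ (1/2:ℝ)^n * dist u v * Real.exp (lam*T) :=
          mul_le_mul_of_nonneg_left hexp (by positivity)
      _ = (1/2:ℝ)^n * Real.exp (lam*T) * dist u v := by ring
  have hcontr : ContractingWith K (P^[n]) := by
    refine ⟨?_, hlipP⟩
    rw [← NNReal.coe_lt_coe, NNReal.coe_one, hKdef, Real.coe_toNNReal _ hK0]
    exact hKlt
  set z : C(↥(Icc (0:ℝ) T), Fin d → ℂ) := ContractingWith.fixedPoint (P^[n]) hcontr with hzdef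
  have hz : P^[n] z = z := hcontr.fixedPoint_isFixedPt
  have hPz : P z = z := by
    have h1 : Function.IsFixedPt (P^[n]) (P z) := by
      show P^[n] (P z) = P z
      rw [← Function.iterate_succ_apply, Function.iterate_succ_apply', hz]
    have h2 := hcontr.fixedPoint_unique h1
    rw [hzdef]
    exact h2
  -- the solution
  refine ⟨fun t => z (projIcc 0 T hT.le t), ⟨?_, ?_⟩, ?_⟩
  · exact (z.continuous.comp continuous_projIcc).continuousOn
  · intro t ht i
    have hco : (↑(projIcc 0 T hT.le t) : ℝ) = t := by rw [projIcc_of_mem hT.le ht]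
    have h1 : z (projIcc 0 T hT.le t) i = (P z) (projIcc 0 T hT.le t) i := by rw [hPz]
    show z (projIcc 0 T hT.le t) i = x₀ i + (Real.Gamma (α i))⁻¹ •
      ∫ s in (0:ℝ)..t, ((t - s) ^ (α i - 1) : ℝ) • f s (z (projIcc 0 T hT.le s)) i
    rw [h1, hPapp, hco]
    congr 1
    congr 1
    apply intervalIntegral.integral_congr
    intro s hs
    rw [uIcc_of_le ht.1] at hs
    have hsI : s ∈ Icc (0:ℝ) T := ⟨hs.1, hs.2.trans ht.2⟩
    have hco2 : (↑(projIcc 0 T hT.le s) : ℝ) = s := by rw [projIcc_of_mem hT.le hsI]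
    show ((t:ℝ) - s) ^ (α i - 1) • f (↑(projIcc 0 T hT.le s)) (z (projIcc 0 T hT.le s)) i
      = ((t:ℝ) - s) ^ (α i - 1) • f s (z (projIcc 0 T hT.le s)) i
    rw [hco2]
  · rintro y ⟨hycont, hyeq⟩
    let w : C(↥(Icc (0:ℝ) T), Fin d → ℂ) := ⟨(Icc (0:ℝ) T).restrict y, hycont.restrict⟩
    have hw : P w = w := by
      apply ContinuousMap.ext
      intro p
      funext i
      rw [hPapp]
      have hpI : (↑p : ℝ) ∈ Icc (0:ℝ) T := p.2
      have hyp := hyeq (↑p) hpI i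
      have hwp : w p i = y (↑p) i := rfl
      rw [hwp, hyp]
      congr 1
      congr 1
      apply intervalIntegral.integral_congr
      intro s hs
      rw [uIcc_of_le hpI.1] at hs
      have hsI : s ∈ Icc (0:ℝ) T := ⟨hs.1, hs.2.trans hpI.2⟩
      have hco2 : (↑(projIcc 0 T hT.le s) : ℝ) = s := by rw [projIcc_of_mem hT.le hsI]
      show ((↑p:ℝ) - s) ^ (α i - 1) • f (↑(projIcc 0 T hT.le s)) (w (projIcc 0 T hT.le s)) i
        = ((↑p:ℝ) - s) ^ (α i - 1) • f s (y s) i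
      have hws : w (projIcc 0 T hT.le s) = y s := by
        show y (↑(projIcc 0 T hT.le s)) = y s
        rw [hco2]
      rw [hco2, hws]
    have hwn : Function.IsFixedPt (P^[n]) w := Function.IsFixedPt.iterate hw n
    have hwz : w = z := by
      rw [hzdef]
      exact hcontr.fixedPoint_unique hwn
    intro t ht
    calc y t = w ⟨t, ht⟩ := rfl
      _ = z ⟨t, ht⟩ := by rw [hwz]
      _ = z (projIcc 0 T hT.le t) := by rw [projIcc_of_mem hT.le ht]
end

section
/- Let f : [0,∞) × ℂ^d → ℂ^d be continuous and globally Lipschitz in the second variable, and let α ∈ (0,1]^d, x₀ ∈ ℂ^d. Then the initial value problem given by the Volterra system x_i(t) = x_i⁰ + (1/Γ(α_i)) ∫₀ᵗ (t−s)^{α_i−1} f_i(s, x(s)) ds has a unique solution in C([0,∞); ℂ^d). -/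
open MeasureTheory Set Real intervalIntegral

lemma fv_rpow_add_le {x y p : ℝ} (hx : 0 ≤ x) (hy : 0 ≤ y) (hp : 0 ≤ p) (hp1 : p ≤ 1) :
    (x + y) ^ p ≤ x ^ p + y ^ p := by
  have h := NNReal.rpow_add_le_add_rpow x.toNNReal y.toNNReal hp hp1
  have := NNReal.coe_le_coe.2 h
  simpa [NNReal.coe_rpow, Real.coe_toNNReal x hx, Real.coe_toNNReal y hy,
    ← Real.toNNReal_add hx hy, max_eq_left (add_nonneg hx hy)] using this

lemma fv_kerInt {a : ℝ} (ha : -1 < a) (t u v : ℝ) :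
    IntervalIntegrable (fun s => (t - s) ^ a) volume u v := by
  have h := (intervalIntegrable_rpow' (a := t - u) (b := t - v) ha).comp_sub_left t
  simpa using h

lemma fv_kerIntC {a : ℝ} (ha : -1 < a) (t u v : ℝ) :
    IntervalIntegrable (fun s => (((t - s) ^ a : ℝ) : ℂ)) volume u v :=
  ⟨(fv_kerInt ha t u v).1.ofReal, (fv_kerInt ha t u v).2.ofReal⟩

lemma fv_kerSmulInt {a : ℝ} (ha : -1 < a) {g : ℝ → ℂ} {t u v : ℝ}
    (hg : ContinuousOn g (uIcc u v)) :
    IntervalIntegrable (fun s => ((t - s) ^ a : ℝ) • g s) volume u v := by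
  have h := (fv_kerIntC ha t u v).mul_continuousOn hg
  simpa only [Complex.real_smul] using h

lemma fv_kerIntegral {a : ℝ} (ha : -1 < a) (u v t : ℝ) :
    ∫ s in u..v, (t - s) ^ a = ((t - u) ^ (a + 1) - (t - v) ^ (a + 1)) / (a + 1) := by
  rw [intervalIntegral.integral_comp_sub_left (fun x => x ^ a) t, integral_rpow (Or.inl ha)]

lemma fv_holder {a : ℝ} (ha0 : 0 < a) (ha1 : a ≤ 1) {g : ℝ → ℂ} (hg : ContinuousOn g (Ici 0))
    {M T t t' : ℝ} (hM : ∀ s ∈ Icc (0:ℝ) T, ‖g s‖ ≤ M) (h0 : 0 ≤ t') (htt : t' ≤ t)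
    (hT : t ≤ T) :
    ‖(∫ s in (0:ℝ)..t, ((t - s) ^ (a - 1) : ℝ) • g s) -
        ∫ s in (0:ℝ)..t', ((t' - s) ^ (a - 1) : ℝ) • g s‖ ≤ 2 * M * (t - t') ^ a / a := by
  have haa : (-1:ℝ) < a - 1 := by linarith
  have ht0 : (0:ℝ) ≤ t := le_trans h0 htt
  have hT0 : (0:ℝ) ≤ T := le_trans ht0 hT
  have hM0 : 0 ≤ M := le_trans (norm_nonneg _) (hM 0 ⟨le_refl _, hT0⟩)
  have hsub : Icc (0:ℝ) t ⊆ Icc 0 T := Icc_subset_Icc le_rfl hT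
  have hg1 : ContinuousOn g (uIcc (0:ℝ) t') := by
    refine hg.mono ?_; rw [uIcc_of_le h0]; exact fun s hs => hs.1
  have hg2 : ContinuousOn g (uIcc t' t) := by
    refine hg.mono ?_; rw [uIcc_of_le htt]; exact fun s hs => le_trans h0 hs.1
  have I1 : IntervalIntegrable (fun s => ((t - s) ^ (a-1) : ℝ) • g s) volume 0 t' :=
    fv_kerSmulInt haa hg1
  have I2 : IntervalIntegrable (fun s => ((t - s) ^ (a-1) : ℝ) • g s) volume t' t :=
    fv_kerSmulInt haa hg2
  have I3 : IntervalIntegrable (fun s => ((t' - s) ^ (a-1) : ℝ) • g s) volume 0 t' :=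
    fv_kerSmulInt haa hg1
  have hsplit : (∫ s in (0:ℝ)..t, ((t - s) ^ (a-1) : ℝ) • g s) =
      (∫ s in (0:ℝ)..t', ((t - s) ^ (a-1) : ℝ) • g s) +
        ∫ s in t'..t, ((t - s) ^ (a-1) : ℝ) • g s :=
    (intervalIntegral.integral_add_adjacent_intervals I1 I2).symm
  have hE1 : (∫ s in (0:ℝ)..t', ((t - s) ^ (a-1) : ℝ) • g s) -
      (∫ s in (0:ℝ)..t', ((t' - s) ^ (a-1) : ℝ) • g s) =
      ∫ s in (0:ℝ)..t', (((t - s) ^ (a-1) - (t' - s) ^ (a-1) : ℝ)) • g s := by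
    rw [← intervalIntegral.integral_sub I1 I3]
    refine intervalIntegral.integral_congr fun s _ => ?_
    rw [sub_smul]
  have key : (∫ s in (0:ℝ)..t, ((t - s) ^ (a-1) : ℝ) • g s) -
      (∫ s in (0:ℝ)..t', ((t' - s) ^ (a-1) : ℝ) • g s) =
      (∫ s in (0:ℝ)..t', (((t - s) ^ (a-1) - (t' - s) ^ (a-1) : ℝ)) • g s) +
        ∫ s in t'..t, ((t - s) ^ (a-1) : ℝ) • g s := by
    rw [hsplit, ← hE1]; ring
  rw [key]
  -- bound the two pieces
  have bound2 : ‖∫ s in t'..t, ((t - s) ^ (a-1) : ℝ) • g s‖ ≤ M * (t - t') ^ a / a := by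
    have hb : ∀ᵐ s ∂volume.restrict (Set.uIoc t' t),
        ‖((t - s) ^ (a-1) : ℝ) • g s‖ ≤ (t - s) ^ (a-1) * M := by
      rw [uIoc_of_le htt]
      filter_upwards [ae_restrict_mem measurableSet_Ioc] with s hs
      have hts : (0:ℝ) ≤ t - s := by linarith [hs.2]
      rw [norm_smul, Real.norm_eq_abs, abs_of_nonneg (Real.rpow_nonneg hts _)]
      exact mul_le_mul_of_nonneg_left (hM s ⟨le_trans h0 hs.1.le, le_trans hs.2 hT⟩)
        (Real.rpow_nonneg hts _)
    have hbi : IntervalIntegrable (fun s => (t - s) ^ (a-1) * M) volume t' t :=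
      (fv_kerInt haa t t' t).mul_const M
    refine le_trans (intervalIntegral.norm_integral_le_abs_of_norm_le hb hbi) ?_
    rw [intervalIntegral.integral_mul_const, fv_kerIntegral haa]
    simp only [sub_add_cancel, sub_self, sub_zero, Real.zero_rpow ha0.ne']
    have h3 : (0:ℝ) ≤ (t - t') ^ a := Real.rpow_nonneg (by linarith) a
    rw [abs_of_nonneg (mul_nonneg (div_nonneg h3 ha0.le) hM0)]
    exact le_of_eq (by ring)
  have bound1 : ‖∫ s in (0:ℝ)..t', (((t - s) ^ (a-1) - (t' - s) ^ (a-1) : ℝ)) • g s‖ ≤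
      M * (t - t') ^ a / a := by
    have hb : ∀ᵐ s ∂volume.restrict (Set.uIoc 0 t'),
        ‖(((t - s) ^ (a-1) - (t' - s) ^ (a-1) : ℝ)) • g s‖ ≤
          ((t' - s) ^ (a-1) - (t - s) ^ (a-1)) * M := by
      rw [uIoc_of_le h0]
      have hne : ∀ᵐ s : ℝ ∂volume.restrict (Ioc 0 t'), s ≠ t' := by
        refine ae_restrict_of_ae ?_
        have : volume ({t'} : Set ℝ) = 0 := measure_singleton t'
        rw [MeasureTheory.ae_iff]
        convert this using 2
        ext s; simp
      filter_upwards [ae_restrict_mem measurableSet_Ioc, hne] with s hs hsne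
      have hst' : 0 < t' - s := lt_of_le_of_ne (by linarith [hs.2]) (by intro h; exact hsne (by linarith))
      have hst : 0 < t - s := lt_of_lt_of_le hst' (by linarith)
      have hmono : (t - s) ^ (a-1) ≤ (t' - s) ^ (a-1) :=
        Real.rpow_le_rpow_of_nonpos hst' (by linarith) (by linarith)
      rw [norm_smul, Real.norm_eq_abs, abs_of_nonpos (by linarith), neg_sub]
      exact mul_le_mul_of_nonneg_left (hM s ⟨hs.1.le, by linarith [hs.2]⟩) (by linarith)
    have hbi : IntervalIntegrable (fun s => ((t' - s) ^ (a-1) - (t - s) ^ (a-1)) * M)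
        volume 0 t' := ((fv_kerInt haa t' 0 t').sub (fv_kerInt haa t 0 t')).mul_const M
    refine le_trans (intervalIntegral.norm_integral_le_abs_of_norm_le hb hbi) ?_
    rw [intervalIntegral.integral_mul_const,
      intervalIntegral.integral_sub (fv_kerInt haa t' 0 t') (fv_kerInt haa t 0 t'),
      fv_kerIntegral haa, fv_kerIntegral haa]
    simp only [sub_add_cancel, sub_self, sub_zero, Real.zero_rpow ha0.ne']
    have h1 : t' ^ a ≤ t ^ a := Real.rpow_le_rpow h0 htt ha0.le
    have h3 : (0:ℝ) ≤ (t - t') ^ a := Real.rpow_nonneg (by linarith) a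
    have h2 : t ^ a ≤ t' ^ a + (t - t') ^ a := by
      have := fv_rpow_add_le h0 (by linarith : (0:ℝ) ≤ t - t') ha0.le ha1
      rw [add_sub_cancel] at this
      exact this
    rw [abs_mul, abs_of_nonneg hM0, div_sub_div_same, abs_div, abs_of_pos ha0]
    have habs : |t' ^ a - (t ^ a - (t - t') ^ a)| ≤ (t - t') ^ a := by
      rw [abs_le]; constructor <;> linarith
    calc |t' ^ a - (t ^ a - (t - t') ^ a)| / a * M
        ≤ (t - t') ^ a / a * M := by gcongr
      _ = M * (t - t') ^ a / a := by ring
  calc ‖(∫ s in (0:ℝ)..t', (((t - s) ^ (a-1) - (t' - s) ^ (a-1) : ℝ)) • g s) +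
        ∫ s in t'..t, ((t - s) ^ (a-1) : ℝ) • g s‖
      ≤ _ + _ := norm_add_le _ _
    _ ≤ M * (t - t') ^ a / a + M * (t - t') ^ a / a := add_le_add bound1 bound2
    _ = 2 * M * (t - t') ^ a / a := by ring

-- key estimate : ∫_0^t (t-s)^(a-1) e^{λ s} ds ≤ e^{λ t} λ^{-a} Γ(a)
lemma fv_kerExp {a lam : ℝ} (ha0 : 0 < a) (hlam : 0 < lam) {t : ℝ} (ht : 0 ≤ t) :
    ∫ s in (0:ℝ)..t, (t - s) ^ (a - 1) * Real.exp (lam * s) ≤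
      Real.exp (lam * t) * (lam ^ (-a) * Real.Gamma a) := by
  have ha1 : (-1:ℝ) < a - 1 := by linarith
  -- substitution u = t - s
  have h1 : (∫ s in (0:ℝ)..t, (t - s) ^ (a - 1) * Real.exp (lam * s)) =
      ∫ x in (0:ℝ)..t, x ^ (a - 1) * Real.exp (lam * (t - x)) := by
    have := intervalIntegral.integral_comp_sub_left
      (fun x => x ^ (a - 1) * Real.exp (lam * (t - x))) t (a := 0) (b := t)
    simp only [sub_sub_cancel, sub_zero, sub_self] at this
    rw [← this]
  rw [h1]
  have h2 : (∫ x in (0:ℝ)..t, x ^ (a - 1) * Real.exp (lam * (t - x))) =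
      Real.exp (lam * t) * ∫ x in (0:ℝ)..t, x ^ (a - 1) * Real.exp (-(lam * x)) := by
    rw [← intervalIntegral.integral_const_mul]
    refine intervalIntegral.integral_congr fun x _ => ?_
    rw [mul_sub, Real.exp_sub, div_eq_mul_inv, ← Real.exp_neg]
    ring
  rw [h2]
  have hexp : 0 < Real.exp (lam * t) := Real.exp_pos _
  refine mul_le_mul_of_nonneg_left ?_ hexp.le
  -- compare with integral over Ioi 0
  have hInt : IntegrableOn (fun x : ℝ => x ^ (a - 1) * Real.exp (-(lam * x))) (Ioi 0) := by
    have := integrableOn_rpow_mul_exp_neg_mul_rpow (s := a - 1) (p := 1) (b := lam) ha1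
      zero_lt_one hlam
    simpa [Real.rpow_one, neg_mul] using this
  have hval : (∫ x in Ioi (0:ℝ), x ^ (a - 1) * Real.exp (-(lam * x))) =
      lam ^ (-a) * Real.Gamma a := by
    have := integral_rpow_mul_exp_neg_mul_rpow (p := 1) (q := a - 1) (b := lam)
      zero_lt_one ha1 hlam
    simp only [Real.rpow_one, neg_mul] at this ⊢
    rw [this]
    norm_num
  rw [intervalIntegral.integral_of_le ht, ← hval]
  refine setIntegral_mono_set hInt ?_ (HasSubset.Subset.eventuallyLE Ioc_subset_Ioi_self)
  filter_upwards [ae_restrict_mem measurableSet_Ioi] with x hx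
  exact mul_nonneg (Real.rpow_nonneg (le_of_lt hx) _) (Real.exp_pos _).le

lemma fv_contF {a : ℝ} (ha0 : 0 < a) (ha1 : a ≤ 1) {g : ℝ → ℂ} (hg : ContinuousOn g (Ici 0)) :
    ContinuousOn (fun t => ∫ s in (0:ℝ)..t, ((t - s) ^ (a - 1) : ℝ) • g s) (Ici 0) := by
  intro t₀ ht₀
  simp only [mem_Ici] at ht₀
  set T := t₀ + 1 with hT
  obtain ⟨M, hM⟩ := (isCompact_Icc (a := (0:ℝ)) (b := T)).exists_bound_of_continuousOn
    (hg.mono (fun s hs => hs.1))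
  have hM0 : 0 ≤ M := le_trans (norm_nonneg _) (hM 0 ⟨le_rfl, by linarith⟩)
  rw [Metric.continuousWithinAt_iff]
  intro ε hε
  set δ₀ : ℝ := (a * ε / (2 * M + 1)) ^ (a⁻¹) with hδ₀
  have hδ₀pos : 0 < δ₀ := Real.rpow_pos_of_pos (by positivity) _
  refine ⟨min 1 δ₀, lt_min one_pos hδ₀pos, ?_⟩
  intro u hu hdist
  simp only [mem_Ici] at hu
  have hkey : ∀ t' t : ℝ, 0 ≤ t' → t' ≤ t → t ≤ T → t - t' < min 1 δ₀ →
      dist (∫ s in (0:ℝ)..t, ((t - s) ^ (a - 1) : ℝ) • g s)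
        (∫ s in (0:ℝ)..t', ((t' - s) ^ (a - 1) : ℝ) • g s) < ε := by
    intro t' t h0 htt hTt hlt
    rw [dist_eq_norm]
    refine lt_of_le_of_lt (fv_holder ha0 ha1 hg hM h0 htt hTt) ?_
    have h1 : (t - t') ^ a < δ₀ ^ a := by
      rcases eq_or_lt_of_le (sub_nonneg.2 htt) with h | h
      · rw [← h, Real.zero_rpow ha0.ne']
        exact Real.rpow_pos_of_pos hδ₀pos a
      · exact Real.rpow_lt_rpow (by linarith) (lt_of_lt_of_le hlt (min_le_right _ _)) ha0
    have h2 : δ₀ ^ a = a * ε / (2 * M + 1) := by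
      rw [hδ₀, ← Real.rpow_mul (by positivity), inv_mul_cancel₀ ha0.ne', Real.rpow_one]
    have h3 : 0 ≤ (t - t') ^ a := Real.rpow_nonneg (by linarith) a
    calc 2 * M * (t - t') ^ a / a ≤ (2 * M + 1) * (t - t') ^ a / a := by
          gcongr
          linarith
      _ < (2 * M + 1) * (a * ε / (2 * M + 1)) / a := by
          rw [h2] at h1
          gcongr
      _ = ε := by field_simp
  -- now conclude using hkey in both orders
  rcases le_total u t₀ with h | h
  · have := hkey u t₀ hu h (by linarith) (by
      rw [dist_comm] at hdist
      rw [Real.dist_eq, abs_of_nonneg (by linarith)] at hdist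
      linarith [hdist])
    rw [dist_comm]
    exact this
  · refine hkey t₀ u ht₀ h ?_ ?_
    · rw [Real.dist_eq, abs_of_nonneg (by linarith)] at hdist
      rw [hT]; linarith [lt_of_lt_of_le hdist (min_le_left _ _)]
    · rw [Real.dist_eq, abs_of_nonneg (by linarith)] at hdist
      exact hdist

lemma fv_kerBound {a : ℝ} (ha0 : 0 < a) {h : ℝ → ℂ} {t lam C : ℝ} (hlam : 0 < lam)
    (ht : 0 ≤ t) (hC : 0 ≤ C)
    (hint : IntervalIntegrable (fun s => ((t - s) ^ (a - 1) : ℝ) • h s) volume 0 t)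
    (hb : ∀ s ∈ Icc (0:ℝ) t, ‖h s‖ ≤ C * Real.exp (lam * s)) :
    ‖∫ s in (0:ℝ)..t, ((t - s) ^ (a - 1) : ℝ) • h s‖ ≤
      C * (Real.exp (lam * t) * (lam ^ (-a) * Real.Gamma a)) := by
  have haa : (-1:ℝ) < a - 1 := by linarith
  have hbd : ∀ᵐ s ∂volume.restrict (Set.uIoc 0 t),
      ‖((t - s) ^ (a - 1) : ℝ) • h s‖ ≤ (t - s) ^ (a - 1) * (C * Real.exp (lam * s)) := by
    rw [uIoc_of_le ht]
    filter_upwards [ae_restrict_mem measurableSet_Ioc] with s hs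
    have hts : (0:ℝ) ≤ t - s := by linarith [hs.2]
    rw [norm_smul, Real.norm_eq_abs, abs_of_nonneg (Real.rpow_nonneg hts _)]
    exact mul_le_mul_of_nonneg_left (hb s ⟨hs.1.le, hs.2⟩) (Real.rpow_nonneg hts _)
  have hbi : IntervalIntegrable (fun s => (t - s) ^ (a - 1) * (C * Real.exp (lam * s)))
      volume 0 t := by
    refine (fv_kerInt haa t 0 t).mul_continuousOn ?_
    exact (Continuous.continuousOn (by continuity))
  refine le_trans (intervalIntegral.norm_integral_le_abs_of_norm_le hbd hbi) ?_
  have hnn : (0:ℝ) ≤ ∫ s in (0:ℝ)..t, (t - s) ^ (a - 1) * (C * Real.exp (lam * s)) := by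
    refine intervalIntegral.integral_nonneg ht fun s hs => ?_
    have hts : (0:ℝ) ≤ t - s := by linarith [hs.2]
    exact mul_nonneg (Real.rpow_nonneg hts _) (by positivity)
  rw [abs_of_nonneg hnn]
  have heq : (∫ s in (0:ℝ)..t, (t - s) ^ (a - 1) * (C * Real.exp (lam * s))) =
      C * ∫ s in (0:ℝ)..t, (t - s) ^ (a - 1) * Real.exp (lam * s) := by
    rw [← intervalIntegral.integral_const_mul]
    exact intervalIntegral.integral_congr fun s _ => by ring
  rw [heq]
  exact mul_le_mul_of_nonneg_left (fv_kerExp ha0 hlam ht) hC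

theorem stmt_2
    (d : ℕ) (hd : 1 ≤ d)
    (α : Fin d → ℝ) (hα : ∀ i, α i ∈ Set.Ioc (0 : ℝ) 1)
    (f : ℝ → (Fin d → ℂ) → (Fin d → ℂ))
    (hf : ContinuousOn (fun p : ℝ × (Fin d → ℂ) => f p.1 p.2)
        (Set.Ici 0 ×ˢ Set.univ))
    (L : ℝ) (hL : 0 < L)
    (hLip : ∀ i, ∀ t ∈ Set.Ici (0 : ℝ), ∀ y z : Fin d → ℂ,
        ‖f t y i - f t z i‖ ≤ L * ‖y - z‖)
    (x₀ : Fin d → ℂ) :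
    ∃ x : ℝ → (Fin d → ℂ),
      (ContinuousOn x (Set.Ici 0) ∧
        ∀ t ∈ Set.Ici (0 : ℝ), ∀ i : Fin d,
          x t i = x₀ i + (Real.Gamma (α i))⁻¹ •
            ∫ s in (0 : ℝ)..t, ((t - s) ^ (α i - 1) : ℝ) • f s (x s) i) ∧
      ∀ y : ℝ → (Fin d → ℂ),
        (ContinuousOn y (Set.Ici 0) ∧
          ∀ t ∈ Set.Ici (0 : ℝ), ∀ i : Fin d,
            y t i = x₀ i + (Real.Gamma (α i))⁻¹ •
              ∫ s in (0 : ℝ)..t, ((t - s) ^ (α i - 1) : ℝ) • f s (y s) i) →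
        Set.EqOn y x (Set.Ici 0) := by
  have hne : Nonempty (Fin d) := ⟨⟨0, hd⟩⟩
  set am := Finset.univ.inf' Finset.univ_nonempty α with ham
  have ham_le : ∀ i, am ≤ α i := fun i => Finset.inf'_le α (Finset.mem_univ i)
  obtain ⟨i₀, -, hi₀⟩ := Finset.exists_mem_eq_inf' Finset.univ_nonempty α
  have ham0 : 0 < am := by rw [ham, hi₀]; exact (hα i₀).1
  set lam := max 1 ((2 * L) ^ am⁻¹) with hlamdef
  have hlam1 : (1:ℝ) ≤ lam := le_max_left _ _
  have hlam0 : (0:ℝ) < lam := lt_of_lt_of_le one_pos hlam1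
  have hhalf : ∀ i, L * lam ^ (-(α i)) ≤ 1/2 := by
    intro i
    have h2L : (0:ℝ) < 2 * L := by linarith
    have hA : (2 * L) ≤ lam ^ am := by
      have h1 : ((2 * L) ^ am⁻¹) ^ am ≤ lam ^ am :=
        Real.rpow_le_rpow (Real.rpow_nonneg h2L.le _) (le_max_right _ _) ham0.le
      rwa [← Real.rpow_mul h2L.le, inv_mul_cancel₀ ham0.ne', Real.rpow_one] at h1
    have hB : lam ^ am ≤ lam ^ (α i) := Real.rpow_le_rpow_of_exponent_le hlam1 (ham_le i)
    have hpos : (0:ℝ) < lam ^ (α i) := Real.rpow_pos_of_pos hlam0 _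
    rw [Real.rpow_neg hlam0.le, mul_inv_le_iff₀ hpos]
    nlinarith
  have hG : ∀ i, 0 < Real.Gamma (α i) := fun i => Real.Gamma_pos_of_pos (hα i).1
  -- the Picard operator
  set P : (ℝ → (Fin d → ℂ)) → ℝ → (Fin d → ℂ) := fun x t i =>
    x₀ i + (Real.Gamma (α i))⁻¹ •
      ∫ s in (0:ℝ)..t, ((t - s) ^ (α i - 1) : ℝ) • f s (x s) i with hP
  have hfc : ∀ x : ℝ → Fin d → ℂ, ContinuousOn x (Ici 0) → ∀ i,
      ContinuousOn (fun s => f s (x s) i) (Ici 0) := by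
    intro x hx i
    have h1 : ContinuousOn (fun s => f s (x s)) (Ici 0) :=
      ContinuousOn.comp (g := fun p : ℝ × (Fin d → ℂ) => f p.1 p.2) (f := fun s => (s, x s))
        (t := Ici 0 ×ˢ univ) hf (continuousOn_id.prodMk hx) fun s hs => ⟨hs, mem_univ _⟩
    exact (continuous_apply i).comp_continuousOn h1
  have hPcont : ∀ x, ContinuousOn x (Ici 0) → ContinuousOn (P x) (Ici 0) := by
    intro x hx
    rw [continuousOn_pi]
    intro i
    simp only [hP]
    exact continuousOn_const.add
      ((fv_contF (hα i).1 (hα i).2 (hfc x hx i)).const_smul ((Real.Gamma (α i))⁻¹))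
  -- contraction estimate
  have hcontr : ∀ u v : ℝ → Fin d → ℂ, ContinuousOn u (Ici 0) → ContinuousOn v (Ici 0) →
      ∀ B t : ℝ, 0 ≤ B → 0 ≤ t →
      (∀ s ∈ Icc (0:ℝ) t, ‖u s - v s‖ ≤ B * Real.exp (lam * s)) →
      ‖P u t - P v t‖ ≤ 1/2 * B * Real.exp (lam * t) := by
    intro u v hu hv B t hB ht hbound
    rw [pi_norm_le_iff_of_nonneg (by positivity)]
    intro i
    have hGi := hG i
    have haa : (-1:ℝ) < α i - 1 := by linarith [(hα i).1]
    have hIcc : uIcc (0:ℝ) t ⊆ Ici 0 := by rw [uIcc_of_le ht]; exact fun s hs => hs.1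
    have hIu : IntervalIntegrable (fun s => ((t - s) ^ (α i - 1) : ℝ) • f s (u s) i)
        volume 0 t := fv_kerSmulInt haa ((hfc u hu i).mono hIcc)
    have hIv : IntervalIntegrable (fun s => ((t - s) ^ (α i - 1) : ℝ) • f s (v s) i)
        volume 0 t := fv_kerSmulInt haa ((hfc v hv i).mono hIcc)
    have hdiff : (P u t - P v t) i = (Real.Gamma (α i))⁻¹ •
        ∫ s in (0:ℝ)..t, ((t - s) ^ (α i - 1) : ℝ) • (f s (u s) i - f s (v s) i) := by
      simp only [Pi.sub_apply, hP]
      rw [add_sub_add_left_eq_sub, ← smul_sub, ← intervalIntegral.integral_sub hIu hIv]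
      congr 1
      exact intervalIntegral.integral_congr fun s _ => (smul_sub _ _ _).symm
    have hker : ‖∫ s in (0:ℝ)..t, ((t - s) ^ (α i - 1) : ℝ) •
        (f s (u s) i - f s (v s) i)‖ ≤
        (L * B) * (Real.exp (lam * t) * (lam ^ (-(α i)) * Real.Gamma (α i))) := by
      refine fv_kerBound (hα i).1 hlam0 ht (by positivity)
        (fv_kerSmulInt haa (((hfc u hu i).sub (hfc v hv i)).mono hIcc)) ?_
      intro s hs
      have h1 := hLip i s hs.1 (u s) (v s)
      calc ‖f s (u s) i - f s (v s) i‖ ≤ L * ‖u s - v s‖ := h1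
        _ ≤ L * (B * Real.exp (lam * s)) :=
            mul_le_mul_of_nonneg_left (hbound s hs) hL.le
        _ = (L * B) * Real.exp (lam * s) := by ring
    rw [hdiff, norm_smul, Real.norm_eq_abs, abs_of_nonneg (inv_nonneg.2 hGi.le)]
    calc (Real.Gamma (α i))⁻¹ * ‖∫ s in (0:ℝ)..t, ((t - s) ^ (α i - 1) : ℝ) •
          (f s (u s) i - f s (v s) i)‖
        ≤ (Real.Gamma (α i))⁻¹ *
            ((L * B) * (Real.exp (lam * t) * (lam ^ (-(α i)) * Real.Gamma (α i)))) :=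
          mul_le_mul_of_nonneg_left hker (inv_nonneg.2 hGi.le)
      _ = (L * lam ^ (-(α i))) * (B * Real.exp (lam * t)) * ((Real.Gamma (α i))⁻¹ *
            Real.Gamma (α i)) := by ring
      _ = (L * lam ^ (-(α i))) * (B * Real.exp (lam * t)) := by
          rw [inv_mul_cancel₀ hGi.ne', mul_one]
      _ ≤ 1/2 * B * Real.exp (lam * t) := by
          have h5 := hhalf i
          have h6 : (0:ℝ) ≤ B * Real.exp (lam * t) := by positivity
          nlinarith
  -- Picard iterates
  set X : ℕ → ℝ → Fin d → ℂ := fun n => P^[n] (fun _ => x₀) with hX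
  have hXsucc : ∀ n, X (n + 1) = P (X n) := fun n => Function.iterate_succ_apply' P n _
  have hXcont : ∀ n, ContinuousOn (X n) (Ici 0) := by
    intro n; induction n with
    | zero => exact continuousOn_const
    | succ n ih => rw [hXsucc]; exact hPcont _ ih
  have hCex : ∀ T : ℝ, 0 ≤ T → ∃ C : ℝ, 0 ≤ C ∧ ∀ t ∈ Icc (0:ℝ) T,
      ‖X 1 t - X 0 t‖ ≤ C * Real.exp (lam * t) := by
    intro T hT
    obtain ⟨C, hC⟩ := (isCompact_Icc (a := (0:ℝ)) (b := T)).exists_bound_of_continuousOn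
      (((hXcont 1).sub (hXcont 0)).mono fun s hs => hs.1)
    refine ⟨C, le_trans (norm_nonneg _) (hC 0 ⟨le_rfl, hT⟩), fun t ht => ?_⟩
    calc ‖X 1 t - X 0 t‖ ≤ C := hC t ht
      _ ≤ C * Real.exp (lam * t) := by
          nth_rewrite 1 [← mul_one C]
          exact mul_le_mul_of_nonneg_left
            (Real.one_le_exp (mul_nonneg hlam0.le ht.1))
            (le_trans (norm_nonneg _) (hC 0 ⟨le_rfl, hT⟩))
  have hgeo : ∀ T : ℝ, 0 ≤ T → ∀ C : ℝ, 0 ≤ C →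
      (∀ t ∈ Icc (0:ℝ) T, ‖X 1 t - X 0 t‖ ≤ C * Real.exp (lam * t)) →
      ∀ n, ∀ t ∈ Icc (0:ℝ) T, ‖X (n+1) t - X n t‖ ≤ C * (1/2)^n * Real.exp (lam * t) := by
    intro T hT C hC h0 n
    induction n with
    | zero => intro t ht; simpa using h0 t ht
    | succ n ih =>
      intro t ht
      have h1 : ∀ s ∈ Icc (0:ℝ) t, ‖X (n+1) s - X n s‖ ≤
          (C * (1/2)^n) * Real.exp (lam * s) :=
        fun s hs => ih s ⟨hs.1, le_trans hs.2 ht.2⟩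
      have h2 := hcontr (X (n+1)) (X n) (hXcont _) (hXcont _) (C * (1/2)^n) t
        (by positivity) ht.1 h1
      rw [← hXsucc n, ← hXsucc (n+1)] at h2
      calc ‖X (n+1+1) t - X (n+1) t‖ ≤ 1/2 * (C * (1/2)^n) * Real.exp (lam * t) := h2
        _ = C * (1/2)^(n+1) * Real.exp (lam * t) := by ring
  -- pointwise limit
  have hlimex : ∀ t : ℝ, ∃ l, 0 ≤ t → Filter.Tendsto (fun n => X n t) Filter.atTop (nhds l) := by
    intro t
    by_cases ht : 0 ≤ t
    · obtain ⟨C, hC0, hCb⟩ := hCex t ht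
      have hcauchy : CauchySeq (fun n => X n t) := by
        apply cauchySeq_of_le_geometric (1/2) (C * Real.exp (lam * t)) (by norm_num)
        intro n
        rw [dist_eq_norm, norm_sub_rev]
        calc ‖X (n+1) t - X n t‖ ≤ C * (1/2)^n * Real.exp (lam * t) :=
              hgeo t ht C hC0 hCb n t ⟨ht, le_rfl⟩
          _ = C * Real.exp (lam * t) * (1/2)^n := by ring
      obtain ⟨l, hl⟩ := cauchySeq_tendsto_of_complete hcauchy
      exact ⟨l, fun _ => hl⟩
    · exact ⟨0, fun h => absurd h ht⟩
  choose x hx using hlimex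
  -- tail estimate
  have htail : ∀ t : ℝ, 0 ≤ t → ∀ C : ℝ, 0 ≤ C →
      (∀ s ∈ Icc (0:ℝ) t, ‖X 1 s - X 0 s‖ ≤ C * Real.exp (lam * s)) →
      ∀ n, ∀ s ∈ Icc (0:ℝ) t, ‖X n s - x s‖ ≤ 2 * C * (1/2)^n * Real.exp (lam * s) := by
    intro t ht C hC0 hCb n s hs
    have hs0 : 0 ≤ s := hs.1
    have hdist : ∀ m, dist (X m s) (X (m+1) s) ≤ (C * Real.exp (lam * s)) * (1/2)^m := by
      intro m
      rw [dist_eq_norm, norm_sub_rev]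
      calc ‖X (m+1) s - X m s‖ ≤ C * (1/2)^m * Real.exp (lam * s) :=
            hgeo t ht C hC0 hCb m s hs
        _ = C * Real.exp (lam * s) * (1/2)^m := by ring
    have h3 := dist_le_of_le_geometric_of_tendsto (1/2) (C * Real.exp (lam * s))
      (by norm_num) hdist (hx s hs0) n
    rw [dist_eq_norm] at h3
    calc ‖X n s - x s‖ ≤ C * Real.exp (lam * s) * (1/2)^n / (1 - 1/2) := h3
      _ = 2 * C * (1/2)^n * Real.exp (lam * s) := by norm_num; ring
  -- continuity of the limit
  have hxcont : ContinuousOn x (Ici 0) := by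
    intro t₀ ht₀
    rw [mem_Ici] at ht₀
    have hT1 : (0:ℝ) ≤ t₀ + 1 := by linarith
    obtain ⟨C, hC0, hCb⟩ := hCex (t₀ + 1) hT1
    have huc : TendstoUniformlyOn (fun n => X n) x Filter.atTop (Icc 0 (t₀ + 1)) := by
      rw [Metric.tendstoUniformlyOn_iff]
      intro ε hε
      have hto : Filter.Tendsto (fun n : ℕ => 2 * C * Real.exp (lam * (t₀ + 1)) * (1/2)^n)
          Filter.atTop (nhds 0) := by
        have h1 := tendsto_pow_atTop_nhds_zero_of_lt_one (by norm_num : (0:ℝ) ≤ 1/2)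
          (by norm_num : (1:ℝ)/2 < 1)
        simpa using h1.const_mul (2 * C * Real.exp (lam * (t₀ + 1)))
      filter_upwards [hto.eventually_lt_const hε] with n hn t ht
      rw [dist_comm, dist_eq_norm]
      calc ‖X n t - x t‖ ≤ 2 * C * (1/2)^n * Real.exp (lam * t) :=
            htail (t₀ + 1) hT1 C hC0 hCb n t ht
        _ ≤ 2 * C * (1/2)^n * Real.exp (lam * (t₀ + 1)) := by
            have := Real.exp_le_exp.2 (mul_le_mul_of_nonneg_left ht.2 hlam0.le)
            gcongr
        _ = 2 * C * Real.exp (lam * (t₀ + 1)) * (1/2)^n := by ring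
        _ < ε := hn
    have hc : ContinuousOn x (Icc 0 (t₀ + 1)) :=
      huc.continuousOn (Filter.Eventually.of_forall (f := Filter.atTop) fun n => (hXcont n).mono fun s (hs : s ∈ Icc (0:ℝ) (t₀ + 1)) => hs.1).frequently
    refine (hc t₀ ⟨ht₀, by linarith⟩).mono_of_mem_nhdsWithin ?_
    refine Filter.mem_of_superset
      (inter_mem_nhdsWithin (Ici 0) (Iio_mem_nhds (by linarith : t₀ < t₀ + 1))) ?_
    exact fun s hs => ⟨hs.1, le_of_lt hs.2⟩
  -- the fixed-point equation
  have hxeq : ∀ t, 0 ≤ t → x t = P x t := by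
    intro t ht
    obtain ⟨C, hC0, hCb⟩ := hCex t ht
    funext i
    have h1 : Filter.Tendsto (fun n => X (n+1) t i) Filter.atTop (nhds (x t i)) :=
      ((continuous_apply i).tendsto _).comp ((hx t ht).comp (Filter.tendsto_add_atTop_nat 1))
    have hb : ∀ n, ‖P (X n) t i - P x t i‖ ≤ (C * Real.exp (lam * t)) * (1/2)^n := by
      intro n
      have hcn := hcontr (X n) x (hXcont n) hxcont (2 * C * (1/2)^n) t (by positivity) ht
        (fun s hs => by
          have := htail t ht C hC0 hCb n s hs
          calc ‖X n s - x s‖ ≤ 2 * C * (1/2)^n * Real.exp (lam * s) := this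
            _ = 2 * C * (1/2)^n * Real.exp (lam * s) := rfl)
      have h2 : ‖(P (X n) t - P x t) i‖ ≤ ‖P (X n) t - P x t‖ :=
        norm_le_pi_norm (P (X n) t - P x t) i
      rw [Pi.sub_apply] at h2
      calc ‖P (X n) t i - P x t i‖ ≤ 1/2 * (2 * C * (1/2)^n) * Real.exp (lam * t) :=
            le_trans h2 hcn
        _ = (C * Real.exp (lam * t)) * (1/2)^n := by ring
    have hzero : Filter.Tendsto (fun n : ℕ => (C * Real.exp (lam * t)) * (1/2)^n)
        Filter.atTop (nhds 0) := by
      have hg1 := tendsto_pow_atTop_nhds_zero_of_lt_one (by norm_num : (0:ℝ) ≤ 1/2)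
        (by norm_num : (1:ℝ)/2 < 1)
      simpa using hg1.const_mul (C * Real.exp (lam * t))
    have h3 : Filter.Tendsto (fun n => P (X n) t i - P x t i) Filter.atTop (nhds 0) :=
      squeeze_zero_norm hb hzero
    have h4 : Filter.Tendsto (fun n => P (X n) t i) Filter.atTop (nhds (P x t i)) :=
      tendsto_sub_nhds_zero_iff.1 h3
    have h5 : Filter.Tendsto (fun n => X (n+1) t i) Filter.atTop (nhds (P x t i)) := by
      have : (fun n => X (n+1) t i) = fun n => P (X n) t i := by
        funext n; rw [hXsucc n]
      rwa [this]
    exact tendsto_nhds_unique h1 h5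
  -- uniqueness
  have hxuniq : ∀ y : ℝ → Fin d → ℂ, ContinuousOn y (Ici 0) →
      (∀ t, 0 ≤ t → y t = P y t) → ∀ t, 0 ≤ t → y t = x t := by
    intro y hy hyeq t ht
    set φ : ℝ → ℝ := fun s => Real.exp (-(lam * s)) * ‖y s - x s‖ with hφ
    have hφc : ContinuousOn φ (Icc 0 t) := by
      refine ContinuousOn.mul ?_ (((hy.sub hxcont).mono fun s hs => hs.1).norm)
      exact (Real.continuous_exp.comp (continuous_const.mul continuous_id).neg).continuousOn
    obtain ⟨s₀, hs₀mem, hs₀max⟩ := isCompact_Icc.exists_isMaxOn ⟨0, le_rfl, ht⟩ hφc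
    set D := φ s₀ with hD
    have hD0 : 0 ≤ D := mul_nonneg (Real.exp_pos _).le (norm_nonneg _)
    have hbound : ∀ s ∈ Icc (0:ℝ) t, ‖y s - x s‖ ≤ D * Real.exp (lam * s) := by
      intro s hs
      have h1 : φ s ≤ D := hs₀max hs
      have h2 : ‖y s - x s‖ = Real.exp (lam * s) * φ s := by
        rw [hφ]
        simp only
        rw [← mul_assoc, ← Real.exp_add, add_neg_cancel, Real.exp_zero, one_mul]
      rw [h2]
      calc Real.exp (lam * s) * φ s ≤ Real.exp (lam * s) * D :=
            mul_le_mul_of_nonneg_left h1 (Real.exp_pos _).le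
        _ = D * Real.exp (lam * s) := mul_comm _ _
    have hhalfD : ∀ τ ∈ Icc (0:ℝ) t, φ τ ≤ 1/2 * D := by
      intro τ hτ
      have h2 := hcontr y x hy hxcont D τ hD0 hτ.1
        (fun s hs => hbound s ⟨hs.1, le_trans hs.2 hτ.2⟩)
      rw [← hyeq τ hτ.1, ← hxeq τ hτ.1] at h2
      have h3 : φ τ = Real.exp (-(lam * τ)) * ‖y τ - x τ‖ := rfl
      rw [h3]
      calc Real.exp (-(lam * τ)) * ‖y τ - x τ‖
          ≤ Real.exp (-(lam * τ)) * (1/2 * D * Real.exp (lam * τ)) :=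
            mul_le_mul_of_nonneg_left h2 (Real.exp_pos _).le
        _ = (Real.exp (-(lam * τ)) * Real.exp (lam * τ)) * (1/2 * D) := by ring
        _ = 1/2 * D := by rw [← Real.exp_add, neg_add_cancel, Real.exp_zero, one_mul]
    have hD2 : D ≤ 1/2 * D := hhalfD s₀ hs₀mem
    have hDz : D = 0 := by linarith
    have h6 := hbound t ⟨ht, le_rfl⟩
    rw [hDz, zero_mul] at h6
    have h7 : y t - x t = 0 := norm_le_zero_iff.1 h6
    exact sub_eq_zero.1 h7
  refine ⟨x, ⟨hxcont, fun t ht i => ?_⟩, fun y hy t ht => ?_⟩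
  · rw [mem_Ici] at ht
    exact congrFun (hxeq t ht) i
  · rw [mem_Ici] at ht
    exact hxuniq y hy.1 (fun τ hτ => funext fun i => hy.2 τ hτ i) t ht
end

section
/- Let α₁, α₂ ∈ (0,1], a_{ij} ∈ ℂ (i,j ∈ {1,2}), x₁⁰, x₂⁰ ∈ ℂ, and define coefficients b_{1kℓ}, b_{2kℓ} (k, ℓ ≥ 0) recursively by: b_{100} = x₁⁰, b_{200} = x₂⁰, b_{10ℓ} = 0 for ℓ ≥ 1, b_{2k0} = 0 for k ≥ 1, and b_{1,k+1,ℓ} = [Γ(kα₁+ℓα₂+1)/Γ((k+1)α₁+ℓα₂+1)](a₁₁ b_{1kℓ} + a₁₂ b_{2kℓ}), b_{2,k,ℓ+1} = [Γ(kα₁+ℓα₂+1)/Γ(kα₁+(ℓ+1)α₂+1)](a₂₁ b_{1kℓ} + a₂₂ b_{2kℓ}). Then for j ∈ {1,2} the double series s_j(z) = Σ_{k,ℓ≥0} |b_{jkℓ}| z^{k+ℓ} converges for every z ∈ ℂ. -/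
open Filter

/-- Summability helper: if `g` is nonnegative and eventually dominated by
`C * (k+1) * r^k / ⌊α k⌋!`, it is summable. -/
lemma aux_sum_stmt3 (α C r : ℝ) (hα : 0 < α) (hr : 0 ≤ r) (g : ℕ → ℝ)
    (hg : ∀ k, 0 ≤ g k)
    (hb : ∀ k : ℕ, 1 ≤ ⌊α * k⌋₊ →
      g k ≤ C * (k + 1) * r ^ k / ((⌊α * (k : ℝ)⌋₊).factorial : ℝ)) :
    Summable g := by
  set R : ℝ := 2 * r + 2 with hRdef
  have hR1 : (1 : ℝ) ≤ R := by simp only [hRdef]; linarith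
  have hR0 : (0 : ℝ) < R := by linarith
  set A : ℝ := R ^ (1 / α : ℝ) with hAdef
  have hA0 : 0 ≤ A := Real.rpow_nonneg hR0.le _
  have ht : Tendsto (fun m : ℕ => A * (A ^ m / m.factorial)) atTop (nhds 0) := by
    simpa using (FloorSemiring.tendsto_pow_div_factorial_atTop A).const_mul A
  have hev : ∀ᶠ m in atTop, A * (A ^ m / m.factorial) ≤ 1 :=
    ht.eventually_le_const (by norm_num)
  obtain ⟨N₁, hN₁⟩ := eventually_atTop.mp hev
  set L : ℕ := max N₁ 1 with hLdef
  set K : ℕ := ⌈(L : ℝ) / α⌉₊ with hKdef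
  -- For k ≥ K, the floor is large
  have hfloor : ∀ k : ℕ, K ≤ k → L ≤ ⌊α * (k : ℝ)⌋₊ := by
    intro k hk
    apply Nat.le_floor
    have h1 : (L : ℝ) / α ≤ (K : ℝ) := Nat.le_ceil _
    have h2 : (K : ℝ) ≤ (k : ℝ) := by exact_mod_cast hk
    rw [div_le_iff₀ hα] at h1
    nlinarith
  -- For large floor, R^k / m! ≤ 1
  have hRk : ∀ k : ℕ, L ≤ ⌊α * (k : ℝ)⌋₊ →
      R ^ k / ((⌊α * (k : ℝ)⌋₊).factorial : ℝ) ≤ 1 := by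
    intro k hLk
    set m : ℕ := ⌊α * (k : ℝ)⌋₊ with hmdef
    have hfacpos : (0 : ℝ) < (m.factorial : ℝ) := by exact_mod_cast m.factorial_pos
    have hklt : α * (k : ℝ) < (m : ℝ) + 1 := Nat.lt_floor_add_one _
    have hkle : (k : ℝ) ≤ ((m : ℝ) + 1) / α := by
      rw [le_div_iff₀ hα]; nlinarith
    have hRA : R ^ k ≤ A ^ (m + 1) := by
      have e1 : R ^ k = R ^ ((k : ℕ) : ℝ) := (Real.rpow_natCast R k).symm
      have e2 : A ^ (m + 1) = R ^ ((1 / α) * ((m : ℝ) + 1)) := by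
        rw [hAdef, ← Real.rpow_natCast (R ^ (1 / α : ℝ)) (m + 1),
          ← Real.rpow_mul hR0.le]
        push_cast; ring_nf
      rw [e1, e2]
      apply Real.rpow_le_rpow_of_exponent_le hR1
      rw [one_div_mul_eq_div]
      exact hkle
    have h1 : A * (A ^ m / m.factorial) ≤ 1 := hN₁ m (le_trans (le_max_left _ _) hLk)
    calc R ^ k / (m.factorial : ℝ) ≤ A ^ (m + 1) / (m.factorial : ℝ) := by
          gcongr
      _ = A * (A ^ m / m.factorial) := by rw [pow_succ]; ring
      _ ≤ 1 := h1
  -- eventual bound by |C| * ((k+1) * (1/2)^k)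
  have hbound : ∀ k : ℕ, K ≤ k → g k ≤ |C| * (((k : ℝ) + 1) * (1 / 2) ^ k) := by
    intro k hk
    have hLk := hfloor k hk
    have h1k : 1 ≤ ⌊α * (k : ℝ)⌋₊ := le_trans (le_max_right _ _) hLk
    set m : ℕ := ⌊α * (k : ℝ)⌋₊ with hmdef
    have hfacpos : (0 : ℝ) < (m.factorial : ℝ) := by exact_mod_cast m.factorial_pos
    have hrR : r ≤ R / 2 := by simp only [hRdef]; linarith
    have hrk : r ^ k / (m.factorial : ℝ) ≤ (1 / 2) ^ k := by
      have h2 : r ^ k ≤ (R / 2) ^ k := by gcongr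
      have h3 : (R / 2) ^ k = (1 / 2) ^ k * R ^ k := by rw [div_pow, div_pow]; ring
      have h4 : R ^ k / (m.factorial : ℝ) ≤ 1 := hRk k hLk
      calc r ^ k / (m.factorial : ℝ) ≤ (R / 2) ^ k / (m.factorial : ℝ) :=
            by gcongr
        _ = (1 / 2) ^ k * (R ^ k / (m.factorial : ℝ)) := by rw [h3]; ring
        _ ≤ (1 / 2) ^ k * 1 := by
            apply mul_le_mul_of_nonneg_left h4 (by positivity)
        _ = (1 / 2) ^ k := mul_one _
    calc g k ≤ C * (k + 1) * r ^ k / (m.factorial : ℝ) := hb k h1k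
      _ = C * (((k : ℝ) + 1) * (r ^ k / (m.factorial : ℝ))) := by ring
      _ ≤ |C| * (((k : ℝ) + 1) * (1 / 2) ^ k) := by
          apply mul_le_mul (le_abs_self C) _ _ (abs_nonneg C)
          · exact mul_le_mul_of_nonneg_left hrk (by positivity)
          · positivity
  -- the dominating series is summable
  have hgs : Summable (fun k : ℕ => |C| * (((k : ℝ) + 1) * (1 / 2) ^ k)) := by
    have h1 : Summable (fun k : ℕ => (k : ℝ) ^ 1 * (1 / 2 : ℝ) ^ k) :=
      summable_pow_mul_geometric_of_norm_lt_one 1 (by rw [Real.norm_eq_abs, abs_of_nonneg (by norm_num : (0:ℝ) ≤ 1/2)]; norm_num)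
    have h2 : Summable (fun k : ℕ => (1 / 2 : ℝ) ^ k) :=
      summable_geometric_of_lt_one (by norm_num) (by norm_num)
    refine ((h1.add h2).mul_left |C|).congr fun k => by ring
  -- conclude by comparison on the tail
  rw [← summable_nat_add_iff K]
  apply Summable.of_nonneg_of_le (fun k => hg _)
    (fun k => hbound (k + K) (Nat.le_add_left K k))
  exact (summable_nat_add_iff K).mpr hgs

theorem stmt_3
    (α₁ α₂ : ℝ) (hα₁ : α₁ ∈ Set.Ioc (0 : ℝ) 1) (hα₂ : α₂ ∈ Set.Ioc (0 : ℝ) 1)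
    (a₁₁ a₁₂ a₂₁ a₂₂ x₁ x₂ : ℂ)
    (b1 b2 : ℕ → ℕ → ℂ)
    (h100 : b1 0 0 = x₁) (h200 : b2 0 0 = x₂)
    (h10l : ∀ l : ℕ, 1 ≤ l → b1 0 l = 0)
    (h2k0 : ∀ k : ℕ, 1 ≤ k → b2 k 0 = 0)
    (hrec1 : ∀ k l : ℕ,
      b1 (k + 1) l =
        ((Real.Gamma (k * α₁ + l * α₂ + 1) /
          Real.Gamma ((k + 1) * α₁ + l * α₂ + 1) : ℝ) : ℂ) *
          (a₁₁ * b1 k l + a₁₂ * b2 k l))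
    (hrec2 : ∀ k l : ℕ,
      b2 k (l + 1) =
        ((Real.Gamma (k * α₁ + l * α₂ + 1) /
          Real.Gamma (k * α₁ + (l + 1) * α₂ + 1) : ℝ) : ℂ) *
          (a₂₁ * b1 k l + a₂₂ * b2 k l)) :
    ∀ z : ℂ,
      Summable (fun k : ℕ =>
        (∑ μ ∈ Finset.range (k + 1), ‖b1 μ (k - μ)‖) *
          ‖z‖ ^ k) ∧
      Summable (fun k : ℕ =>
        (∑ μ ∈ Finset.range (k + 1), ‖b2 μ (k - μ)‖) *
          ‖z‖ ^ k) := by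
  obtain ⟨hα₁0, hα₁1⟩ := hα₁
  obtain ⟨hα₂0, hα₂1⟩ := hα₂
  set M : ℝ := 2 * (‖a₁₁‖ + ‖a₁₂‖ + ‖a₂₁‖ +
    ‖a₂₂‖) + 2 with hMdef
  set C : ℝ := ‖x₁‖ + ‖x₂‖ with hCdef
  have hC0 : 0 ≤ C := by positivity
  have haux11 := norm_nonneg a₁₁
  have haux12 := norm_nonneg a₁₂
  have haux21 := norm_nonneg a₂₁
  have haux22 := norm_nonneg a₂₂
  have hM2 : (2 : ℝ) ≤ M := by simp only [hMdef]; linarith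
  have hM0 : (0 : ℝ) < M := by linarith
  have ha11 : ‖a₁₁‖ ≤ M / 2 := by simp only [hMdef]; linarith
  have ha12 : ‖a₁₂‖ ≤ M / 2 := by simp only [hMdef]; linarith
  have ha21 : ‖a₂₁‖ ≤ M / 2 := by simp only [hMdef]; linarith
  have ha22 : ‖a₂₂‖ ≤ M / 2 := by simp only [hMdef]; linarith
  have hΓpos : ∀ k l : ℕ, 0 < Real.Gamma ((k : ℝ) * α₁ + (l : ℝ) * α₂ + 1) := by
    intro k l
    apply Real.Gamma_pos_of_pos
    positivity
  -- the key recursive bound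
  have key : ∀ n : ℕ, ∀ k l : ℕ, k + l = n →
      Real.Gamma ((k : ℝ) * α₁ + (l : ℝ) * α₂ + 1) *
        (‖b1 k l‖ + ‖b2 k l‖) ≤ C * M ^ n := by
    intro n
    induction n with
    | zero =>
      intro k l hkl
      obtain ⟨rfl, rfl⟩ : k = 0 ∧ l = 0 := by omega
      simp [h100, h200, Real.Gamma_one, hCdef]
    | succ n ih =>
      intro k l hkl
      have hb1 : Real.Gamma ((k : ℝ) * α₁ + (l : ℝ) * α₂ + 1) *
          ‖b1 k l‖ ≤ (M / 2) * (C * M ^ n) := by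
        match k, hkl with
        | 0, hkl =>
          rw [h10l l (by omega)]
          simp only [norm_zero, mul_zero]
          positivity
        | (k0 + 1), hkl =>
          have hrec := hrec1 k0 l
          have hΓa := hΓpos k0 l
          have hΓb := hΓpos (k0 + 1) l
          have hcast : (((k0 : ℕ) + 1 : ℕ) : ℝ) * α₁ + (l : ℝ) * α₂ + 1 =
              ((k0 : ℝ) + 1) * α₁ + (l : ℝ) * α₂ + 1 := by push_cast; ring
          rw [hcast] at hΓb ⊢
          have habs : ‖b1 (k0 + 1) l‖ =
              (Real.Gamma ((k0 : ℝ) * α₁ + (l : ℝ) * α₂ + 1) /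
                Real.Gamma (((k0 : ℝ) + 1) * α₁ + (l : ℝ) * α₂ + 1)) *
                ‖a₁₁ * b1 k0 l + a₁₂ * b2 k0 l‖ := by
            rw [hrec, norm_mul, Complex.norm_real, Real.norm_eq_abs, abs_of_nonneg (by positivity)]
          rw [habs, ← mul_assoc, mul_div_cancel₀ _ (ne_of_gt hΓb)]
          have hA : ‖a₁₁ * b1 k0 l + a₁₂ * b2 k0 l‖ ≤
              (M / 2) * (‖b1 k0 l‖ + ‖b2 k0 l‖) := by
            calc ‖a₁₁ * b1 k0 l + a₁₂ * b2 k0 l‖ ≤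
                ‖a₁₁ * b1 k0 l‖ + ‖a₁₂ * b2 k0 l‖ :=
                  norm_add_le _ _
              _ = ‖a₁₁‖ * ‖b1 k0 l‖ +
                  ‖a₁₂‖ * ‖b2 k0 l‖ := by
                  rw [norm_mul, norm_mul]
              _ ≤ (M / 2) * ‖b1 k0 l‖ + (M / 2) * ‖b2 k0 l‖ := by
                  gcongr
              _ = (M / 2) * (‖b1 k0 l‖ + ‖b2 k0 l‖) := by ring
          calc Real.Gamma ((k0 : ℝ) * α₁ + (l : ℝ) * α₂ + 1) *
              ‖a₁₁ * b1 k0 l + a₁₂ * b2 k0 l‖ ≤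
              Real.Gamma ((k0 : ℝ) * α₁ + (l : ℝ) * α₂ + 1) *
              ((M / 2) * (‖b1 k0 l‖ + ‖b2 k0 l‖)) :=
                mul_le_mul_of_nonneg_left hA hΓa.le
            _ = (M / 2) * (Real.Gamma ((k0 : ℝ) * α₁ + (l : ℝ) * α₂ + 1) *
                (‖b1 k0 l‖ + ‖b2 k0 l‖)) := by ring
            _ ≤ (M / 2) * (C * M ^ n) := by
                apply mul_le_mul_of_nonneg_left (ih k0 l (by omega)) (by linarith)
      have hb2 : Real.Gamma ((k : ℝ) * α₁ + (l : ℝ) * α₂ + 1) *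
          ‖b2 k l‖ ≤ (M / 2) * (C * M ^ n) := by
        match l, hkl with
        | 0, hkl =>
          rw [h2k0 k (by omega)]
          simp only [norm_zero, mul_zero]
          positivity
        | (l0 + 1), hkl =>
          have hrec := hrec2 k l0
          have hΓa := hΓpos k l0
          have hΓb := hΓpos k (l0 + 1)
          have hcast : (k : ℝ) * α₁ + (((l0 : ℕ) + 1 : ℕ) : ℝ) * α₂ + 1 =
              (k : ℝ) * α₁ + ((l0 : ℝ) + 1) * α₂ + 1 := by push_cast; ring
          rw [hcast] at hΓb ⊢
          have habs : ‖b2 k (l0 + 1)‖ =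
              (Real.Gamma ((k : ℝ) * α₁ + (l0 : ℝ) * α₂ + 1) /
                Real.Gamma ((k : ℝ) * α₁ + ((l0 : ℝ) + 1) * α₂ + 1)) *
                ‖a₂₁ * b1 k l0 + a₂₂ * b2 k l0‖ := by
            rw [hrec, norm_mul, Complex.norm_real, Real.norm_eq_abs, abs_of_nonneg (by positivity)]
          rw [habs, ← mul_assoc, mul_div_cancel₀ _ (ne_of_gt hΓb)]
          have hA : ‖a₂₁ * b1 k l0 + a₂₂ * b2 k l0‖ ≤
              (M / 2) * (‖b1 k l0‖ + ‖b2 k l0‖) := by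
            calc ‖a₂₁ * b1 k l0 + a₂₂ * b2 k l0‖ ≤
                ‖a₂₁ * b1 k l0‖ + ‖a₂₂ * b2 k l0‖ :=
                  norm_add_le _ _
              _ = ‖a₂₁‖ * ‖b1 k l0‖ +
                  ‖a₂₂‖ * ‖b2 k l0‖ := by
                  rw [norm_mul, norm_mul]
              _ ≤ (M / 2) * ‖b1 k l0‖ + (M / 2) * ‖b2 k l0‖ := by
                  gcongr
              _ = (M / 2) * (‖b1 k l0‖ + ‖b2 k l0‖) := by ring
          calc Real.Gamma ((k : ℝ) * α₁ + (l0 : ℝ) * α₂ + 1) *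
              ‖a₂₁ * b1 k l0 + a₂₂ * b2 k l0‖ ≤
              Real.Gamma ((k : ℝ) * α₁ + (l0 : ℝ) * α₂ + 1) *
              ((M / 2) * (‖b1 k l0‖ + ‖b2 k l0‖)) :=
                mul_le_mul_of_nonneg_left hA hΓa.le
            _ = (M / 2) * (Real.Gamma ((k : ℝ) * α₁ + (l0 : ℝ) * α₂ + 1) *
                (‖b1 k l0‖ + ‖b2 k l0‖)) := by ring
            _ ≤ (M / 2) * (C * M ^ n) := by
                apply mul_le_mul_of_nonneg_left (ih k l0 (by omega)) (by linarith)
      calc Real.Gamma ((k : ℝ) * α₁ + (l : ℝ) * α₂ + 1) *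
          (‖b1 k l‖ + ‖b2 k l‖) =
          Real.Gamma ((k : ℝ) * α₁ + (l : ℝ) * α₂ + 1) * ‖b1 k l‖ +
          Real.Gamma ((k : ℝ) * α₁ + (l : ℝ) * α₂ + 1) * ‖b2 k l‖ := by ring
        _ ≤ (M / 2) * (C * M ^ n) + (M / 2) * (C * M ^ n) := add_le_add hb1 hb2
        _ = C * M ^ (n + 1) := by ring
  -- consequence: individual coefficient bounds
  have hcoef : ∀ k l : ℕ,
      ‖b1 k l‖ ≤ C * M ^ (k + l) /
        Real.Gamma ((k : ℝ) * α₁ + (l : ℝ) * α₂ + 1) ∧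
      ‖b2 k l‖ ≤ C * M ^ (k + l) /
        Real.Gamma ((k : ℝ) * α₁ + (l : ℝ) * α₂ + 1) := by
    intro k l
    have h := key (k + l) k l rfl
    have hΓ := hΓpos k l
    constructor
    · rw [le_div_iff₀ hΓ, mul_comm]
      calc Real.Gamma ((k : ℝ) * α₁ + (l : ℝ) * α₂ + 1) * ‖b1 k l‖ ≤
          Real.Gamma ((k : ℝ) * α₁ + (l : ℝ) * α₂ + 1) *
            (‖b1 k l‖ + ‖b2 k l‖) := by
            apply mul_le_mul_of_nonneg_left _ hΓ.le
            have := norm_nonneg (b2 k l); linarith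
        _ ≤ C * M ^ (k + l) := h
    · rw [le_div_iff₀ hΓ, mul_comm]
      calc Real.Gamma ((k : ℝ) * α₁ + (l : ℝ) * α₂ + 1) * ‖b2 k l‖ ≤
          Real.Gamma ((k : ℝ) * α₁ + (l : ℝ) * α₂ + 1) *
            (‖b1 k l‖ + ‖b2 k l‖) := by
            apply mul_le_mul_of_nonneg_left _ hΓ.le
            have := norm_nonneg (b1 k l); linarith
        _ ≤ C * M ^ (k + l) := h
  -- lower bound for the Gamma values
  set α : ℝ := min α₁ α₂ with hαdef
  have hα0 : 0 < α := lt_min hα₁0 hα₂0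
  have hΓlow : ∀ k l : ℕ, 1 ≤ ⌊α * ((k + l : ℕ) : ℝ)⌋₊ →
      ((⌊α * ((k + l : ℕ) : ℝ)⌋₊.factorial : ℝ)) ≤
        Real.Gamma ((k : ℝ) * α₁ + (l : ℝ) * α₂ + 1) := by
    intro k l h1
    set m : ℕ := ⌊α * ((k + l : ℕ) : ℝ)⌋₊ with hmdef
    have hmn : (m : ℝ) ≤ α * ((k + l : ℕ) : ℝ) := Nat.floor_le (by positivity)
    have hs : α * ((k + l : ℕ) : ℝ) ≤ (k : ℝ) * α₁ + (l : ℝ) * α₂ := by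
      have h1 : α ≤ α₁ := min_le_left _ _
      have h2 : α ≤ α₂ := min_le_right _ _
      have hk : (0 : ℝ) ≤ (k : ℝ) := Nat.cast_nonneg k
      have hl : (0 : ℝ) ≤ (l : ℝ) := Nat.cast_nonneg l
      push_cast
      nlinarith
    have hm1 : (1 : ℝ) ≤ (m : ℝ) := by exact_mod_cast h1
    have := Real.Gamma_nat_eq_factorial m
    rw [← this]
    apply Real.Gamma_strictMonoOn_Ici.monotoneOn
    · simp only [Set.mem_Ici]; linarith
    · simp only [Set.mem_Ici]; linarith
    · linarith
  -- summability via the helper lemma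
  intro z
  set r : ℝ := M * ‖z‖ with hrdef
  have hr0 : 0 ≤ r := by positivity
  constructor
  · apply aux_sum_stmt3 α C r hα0 hr0 _
      (fun k => mul_nonneg (Finset.sum_nonneg fun μ _ => norm_nonneg _)
        (by positivity))
    intro k h1
    set m : ℕ := ⌊α * (k : ℝ)⌋₊ with hmdef
    have hfacpos : (0 : ℝ) < (m.factorial : ℝ) := by exact_mod_cast m.factorial_pos
    have hsum : ∑ μ ∈ Finset.range (k + 1), ‖b1 μ (k - μ)‖ ≤
        ((k : ℝ) + 1) * (C * M ^ k / (m.factorial : ℝ)) := by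
      calc ∑ μ ∈ Finset.range (k + 1), ‖b1 μ (k - μ)‖ ≤
          ∑ μ ∈ Finset.range (k + 1), C * M ^ k / (m.factorial : ℝ) := by
            apply Finset.sum_le_sum
            intro μ hμ
            have hμk : μ ≤ k := by
              simp only [Finset.mem_range] at hμ; omega
            have hadd : μ + (k - μ) = k := by omega
            have hc := (hcoef μ (k - μ)).1
            rw [hadd] at hc
            have hΓl : (m.factorial : ℝ) ≤
                Real.Gamma ((μ : ℝ) * α₁ + ((k - μ : ℕ) : ℝ) * α₂ + 1) := by
              have := hΓlow μ (k - μ)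
              rw [hadd] at this
              exact this h1
            calc ‖b1 μ (k - μ)‖ ≤
                C * M ^ k / Real.Gamma ((μ : ℝ) * α₁ + ((k - μ : ℕ) : ℝ) * α₂ + 1) := hc
              _ ≤ C * M ^ k / (m.factorial : ℝ) :=
                  div_le_div_of_nonneg_left (by positivity) hfacpos hΓl
        _ = ((k : ℝ) + 1) * (C * M ^ k / (m.factorial : ℝ)) := by
            rw [Finset.sum_const, Finset.card_range, nsmul_eq_mul]
            push_cast; ring
    calc (∑ μ ∈ Finset.range (k + 1), ‖b1 μ (k - μ)‖) *
        ‖z‖ ^ k ≤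
        (((k : ℝ) + 1) * (C * M ^ k / (m.factorial : ℝ))) * ‖z‖ ^ k := by
          apply mul_le_mul_of_nonneg_right hsum (by positivity)
      _ = C * ((k : ℝ) + 1) * r ^ k / (m.factorial : ℝ) := by
          rw [hrdef, mul_pow]; ring
  · apply aux_sum_stmt3 α C r hα0 hr0 _
      (fun k => mul_nonneg (Finset.sum_nonneg fun μ _ => norm_nonneg _)
        (by positivity))
    intro k h1
    set m : ℕ := ⌊α * (k : ℝ)⌋₊ with hmdef
    have hfacpos : (0 : ℝ) < (m.factorial : ℝ) := by exact_mod_cast m.factorial_pos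
    have hsum : ∑ μ ∈ Finset.range (k + 1), ‖b2 μ (k - μ)‖ ≤
        ((k : ℝ) + 1) * (C * M ^ k / (m.factorial : ℝ)) := by
      calc ∑ μ ∈ Finset.range (k + 1), ‖b2 μ (k - μ)‖ ≤
          ∑ μ ∈ Finset.range (k + 1), C * M ^ k / (m.factorial : ℝ) := by
            apply Finset.sum_le_sum
            intro μ hμ
            have hμk : μ ≤ k := by
              simp only [Finset.mem_range] at hμ; omega
            have hadd : μ + (k - μ) = k := by omega
            have hc := (hcoef μ (k - μ)).2
            rw [hadd] at hc
            have hΓl : (m.factorial : ℝ) ≤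
                Real.Gamma ((μ : ℝ) * α₁ + ((k - μ : ℕ) : ℝ) * α₂ + 1) := by
              have := hΓlow μ (k - μ)
              rw [hadd] at this
              exact this h1
            calc ‖b2 μ (k - μ)‖ ≤
                C * M ^ k / Real.Gamma ((μ : ℝ) * α₁ + ((k - μ : ℕ) : ℝ) * α₂ + 1) := hc
              _ ≤ C * M ^ k / (m.factorial : ℝ) :=
                  div_le_div_of_nonneg_left (by positivity) hfacpos hΓl
        _ = ((k : ℝ) + 1) * (C * M ^ k / (m.factorial : ℝ)) := by
            rw [Finset.sum_const, Finset.card_range, nsmul_eq_mul]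
            push_cast; ring
    calc (∑ μ ∈ Finset.range (k + 1), ‖b2 μ (k - μ)‖) *
        ‖z‖ ^ k ≤
        (((k : ℝ) + 1) * (C * M ^ k / (m.factorial : ℝ))) * ‖z‖ ^ k := by
          apply mul_le_mul_of_nonneg_right hsum (by positivity)
      _ = C * ((k : ℝ) + 1) * r ^ k / (m.factorial : ℝ) := by
          rw [hrdef, mul_pow]; ring
end

section
/- With the coefficients b_{jkℓ} of the previous recursion, let α* = min{α₁, α₂} and ā = max_{i,j} |a_{ij}|. Then there exists N such that for all k ≥ 0, β_{1,N+k} + β_{2,N+k} ≤ (2ā)^k Γ(Nα*+1)/Γ((N+k)α*+1) · (β_{1,N} + β_{2,N}), where β_{jk} = Σ_{μ=0}^k |b_{j,μ,k−μ}|. -/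
lemma gamma_cross (t s c : ℝ) (ht : 0 < t) (hts : t ≤ s) (hc : 0 ≤ c) :
    Real.Gamma (t + c) * Real.Gamma s ≤ Real.Gamma t * Real.Gamma (s + c) := by
  have hs : 0 < s := ht.trans_le hts
  rcases eq_or_lt_of_le hc with rfl | hc
  · simp [mul_comm]
  rcases eq_or_lt_of_le hts with rfl | hts
  · rw [mul_comm]
  have hD : 0 < s + c - t := by linarith
  have hcvx := Real.convexOn_log_Gamma
  have nn1 : (0:ℝ) ≤ (s-t)/(s+c-t) :=
    div_nonneg (by linarith : (0:ℝ) ≤ s - t) (by linarith : (0:ℝ) ≤ s + c - t)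
  have nn2 : (0:ℝ) ≤ c/(s+c-t) :=
    div_nonneg (by linarith : (0:ℝ) ≤ c) (by linarith : (0:ℝ) ≤ s + c - t)
  have e : (s-t)/(s+c-t) + c/(s+c-t) = 1 := by
    rw [← add_div, div_eq_one_iff_eq hD.ne']; ring
  have e2 : c/(s+c-t) + (s-t)/(s+c-t) = 1 := by rw [add_comm]; exact e
  have harg1 : ((s-t)/(s+c-t)) • t + (c/(s+c-t)) • (s+c) = t + c := by
    rw [smul_eq_mul, smul_eq_mul, div_mul_eq_mul_div, div_mul_eq_mul_div, ← add_div, div_eq_iff hD.ne']; ring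
  have harg2 : (c/(s+c-t)) • t + ((s-t)/(s+c-t)) • (s+c) = s := by
    rw [smul_eq_mul, smul_eq_mul, div_mul_eq_mul_div, div_mul_eq_mul_div, ← add_div, div_eq_iff hD.ne']; ring
  have h1 := hcvx.2 (Set.mem_Ioi.2 ht) (Set.mem_Ioi.2 (by linarith : (0:ℝ) < s + c))
    nn1 nn2 e
  have h2 := hcvx.2 (Set.mem_Ioi.2 ht) (Set.mem_Ioi.2 (by linarith : (0:ℝ) < s + c))
    nn2 nn1 e2
  rw [harg1] at h1
  rw [harg2] at h2
  simp only [Function.comp_apply, smul_eq_mul] at h1 h2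
  have key : Real.log (Real.Gamma (t+c)) + Real.log (Real.Gamma s)
      ≤ Real.log (Real.Gamma t) + Real.log (Real.Gamma (s+c)) := by
    calc Real.log (Real.Gamma (t+c)) + Real.log (Real.Gamma s)
        ≤ ((s-t)/(s+c-t) * Real.log (Real.Gamma t) + c/(s+c-t) * Real.log (Real.Gamma (s+c)))
          + (c/(s+c-t) * Real.log (Real.Gamma t) + (s-t)/(s+c-t) * Real.log (Real.Gamma (s+c))) :=
          add_le_add h1 h2
      _ = ((s-t)/(s+c-t) + c/(s+c-t)) * Real.log (Real.Gamma t)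
          + (c/(s+c-t) + (s-t)/(s+c-t)) * Real.log (Real.Gamma (s+c)) := by ring
      _ = Real.log (Real.Gamma t) + Real.log (Real.Gamma (s+c)) := by rw [e, e2]; ring
  have hg1 : 0 < Real.Gamma (t+c) := Real.Gamma_pos_of_pos (by linarith)
  have hg2 : 0 < Real.Gamma s := Real.Gamma_pos_of_pos hs
  have hg3 : 0 < Real.Gamma t := Real.Gamma_pos_of_pos ht
  have hg4 : 0 < Real.Gamma (s+c) := Real.Gamma_pos_of_pos (by linarith)
  have := Real.exp_le_exp.2 key
  rwa [Real.exp_add, Real.exp_add, Real.exp_log hg1, Real.exp_log hg2,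
    Real.exp_log hg3, Real.exp_log hg4] at this

lemma gamma_mono2 {x y : ℝ} (hx : 2 ≤ x) (hxy : x ≤ y) :
    Real.Gamma x ≤ Real.Gamma y :=
  Real.Gamma_strictMonoOn_Ici.monotoneOn hx (hx.trans hxy) hxy

lemma gamma_ratio_le (t s c c' : ℝ) (ht : 2 ≤ t) (hts : t ≤ s) (hc' : 0 < c') (hcc : c' ≤ c) :
    Real.Gamma s / Real.Gamma (s + c) ≤ Real.Gamma t / Real.Gamma (t + c') := by
  have hgt : 0 < Real.Gamma t := Real.Gamma_pos_of_pos (by linarith)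
  have hgsc : 0 < Real.Gamma (s + c) := Real.Gamma_pos_of_pos (by linarith)
  have hgtc : 0 < Real.Gamma (t + c') := Real.Gamma_pos_of_pos (by linarith)
  have h1 : Real.Gamma (s + c') ≤ Real.Gamma (s + c) :=
    gamma_mono2 (by linarith) (by linarith)
  have h2 : Real.Gamma (t + c') * Real.Gamma s ≤ Real.Gamma t * Real.Gamma (s + c') :=
    gamma_cross t s c' (by linarith) hts hc'.le
  rw [div_le_div_iff₀ hgsc hgtc]
  calc Real.Gamma s * Real.Gamma (t + c') ≤ Real.Gamma t * Real.Gamma (s + c') := by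
        linarith
    _ ≤ Real.Gamma t * Real.Gamma (s + c) := by nlinarith

theorem stmt_4
    (α₁ α₂ : ℝ) (hα₁ : α₁ ∈ Set.Ioc (0 : ℝ) 1) (hα₂ : α₂ ∈ Set.Ioc (0 : ℝ) 1)
    (a₁₁ a₁₂ a₂₁ a₂₂ x₁ x₂ : ℂ)
    (b1 b2 : ℕ → ℕ → ℂ)
    (h100 : b1 0 0 = x₁) (h200 : b2 0 0 = x₂)
    (h10l : ∀ l : ℕ, 1 ≤ l → b1 0 l = 0)
    (h2k0 : ∀ k : ℕ, 1 ≤ k → b2 k 0 = 0)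
    (hrec1 : ∀ k l : ℕ,
      b1 (k + 1) l =
        ((Real.Gamma (k * α₁ + l * α₂ + 1) /
          Real.Gamma ((k + 1) * α₁ + l * α₂ + 1) : ℝ) : ℂ) *
          (a₁₁ * b1 k l + a₁₂ * b2 k l))
    (hrec2 : ∀ k l : ℕ,
      b2 k (l + 1) =
        ((Real.Gamma (k * α₁ + l * α₂ + 1) /
          Real.Gamma (k * α₁ + (l + 1) * α₂ + 1) : ℝ) : ℂ) *
          (a₂₁ * b1 k l + a₂₂ * b2 k l))
    (β1 β2 : ℕ → ℝ)
    (hβ1 : ∀ k, β1 k = ∑ μ ∈ Finset.range (k + 1), ‖b1 μ (k - μ)‖)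
    (hβ2 : ∀ k, β2 k = ∑ μ ∈ Finset.range (k + 1), ‖b2 μ (k - μ)‖)
    (αstar abar : ℝ)
    (hαstar : αstar = min α₁ α₂)
    (habar : abar = max (max (‖a₁₁‖) (‖a₁₂‖))
                        (max (‖a₂₁‖) (‖a₂₂‖))) :
    ∃ N : ℕ, ∀ k : ℕ,
      β1 (N + k) + β2 (N + k) ≤
        (2 * abar) ^ k * Real.Gamma (N * αstar + 1) /
          Real.Gamma ((N + k) * αstar + 1) * (β1 N + β2 N) := by
  obtain ⟨hα₁0, hα₁1⟩ := hα₁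
  obtain ⟨hα₂0, hα₂1⟩ := hα₂
  have hαs0 : 0 < αstar := by rw [hαstar]; exact lt_min hα₁0 hα₂0
  have hαs1 : αstar ≤ α₁ := by rw [hαstar]; exact min_le_left _ _
  have hαs2 : αstar ≤ α₂ := by rw [hαstar]; exact min_le_right _ _
  have ha11 : norm a₁₁ ≤ abar := by
    rw [habar]; exact (le_max_left _ _).trans (le_max_left _ _)
  have ha12 : norm a₁₂ ≤ abar := by
    rw [habar]; exact (le_max_right _ _).trans (le_max_left _ _)
  have ha21 : norm a₂₁ ≤ abar := by
    rw [habar]; exact (le_max_left _ _).trans (le_max_right _ _)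
  have ha22 : norm a₂₂ ≤ abar := by
    rw [habar]; exact (le_max_right _ _).trans (le_max_right _ _)
  have habar0 : 0 ≤ abar := (norm_nonneg a₁₁).trans ha11
  set N : ℕ := ⌈(1:ℝ)/αstar⌉₊ with hNdef
  have hN1 : 1 ≤ (N : ℝ) * αstar := by
    have h := Nat.le_ceil ((1:ℝ)/αstar)
    have := mul_le_mul_of_nonneg_right h hαs0.le
    rwa [div_mul_cancel₀ _ hαs0.ne'] at this
  -- the one-step inequality
  have hstep : ∀ n : ℕ, N ≤ n →
      β1 (n+1) + β2 (n+1) ≤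
        2 * abar * (Real.Gamma ((n:ℝ)*αstar+1) / Real.Gamma (((n:ℝ)+1)*αstar+1))
          * (β1 n + β2 n) := by
    intro n hn
    have hn' : (N:ℝ) ≤ (n:ℝ) := Nat.cast_le.2 hn
    have ht2 : 2 ≤ (n:ℝ)*αstar + 1 := by
      have := mul_le_mul_of_nonneg_right hn' hαs0.le
      linarith
    have hC0 : 0 ≤ Real.Gamma ((n:ℝ)*αstar+1) / Real.Gamma (((n:ℝ)+1)*αstar+1) :=
      le_of_lt (div_pos (Real.Gamma_pos_of_pos (by linarith))
        (Real.Gamma_pos_of_pos (by nlinarith)))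
    have hterm1 : ∀ m ∈ Finset.range (n+1),
        norm (b1 (m+1) (n-m)) ≤
          (Real.Gamma ((n:ℝ)*αstar+1) / Real.Gamma (((n:ℝ)+1)*αstar+1)) *
            (abar * (norm (b1 m (n-m)) + norm (b2 m (n-m)))) := by
      intro m hm
      have hmn : m ≤ n := Nat.lt_succ_iff.mp (Finset.mem_range.mp hm)
      have hmr : (m:ℝ) ≤ (n:ℝ) := Nat.cast_le.2 hmn
      have hcast : ((n-m : ℕ) : ℝ) = (n:ℝ) - (m:ℝ) := by
        push_cast [hmn]; ring
      have h1nn : (0:ℝ) ≤ (m:ℝ) * α₁ := mul_nonneg (Nat.cast_nonneg _) hα₁0.le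
      have h2nn : (0:ℝ) ≤ ((n-m:ℕ):ℝ) * α₂ := mul_nonneg (Nat.cast_nonneg _) hα₂0.le
      have hts : (n:ℝ)*αstar + 1 ≤ (m:ℝ) * α₁ + ((n-m:ℕ):ℝ) * α₂ + 1 := by
        rw [hcast]
        have f1 : (m:ℝ) * αstar ≤ (m:ℝ) * α₁ :=
          mul_le_mul_of_nonneg_left hαs1 (Nat.cast_nonneg _)
        have f2 : ((n:ℝ)-(m:ℝ)) * αstar ≤ ((n:ℝ)-(m:ℝ)) * α₂ :=
          mul_le_mul_of_nonneg_left hαs2 (by linarith)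
        nlinarith
      have hratio :
          Real.Gamma ((m:ℝ) * α₁ + ((n-m:ℕ):ℝ) * α₂ + 1) /
            Real.Gamma (((m:ℝ) * α₁ + ((n-m:ℕ):ℝ) * α₂ + 1) + α₁) ≤
          Real.Gamma ((n:ℝ)*αstar+1) / Real.Gamma (((n:ℝ)+1)*αstar+1) := by
        have h := gamma_ratio_le ((n:ℝ)*αstar+1) ((m:ℝ) * α₁ + ((n-m:ℕ):ℝ) * α₂ + 1)
          α₁ αstar ht2 hts hαs0 hαs1
        have e : (n:ℝ)*αstar+1+αstar = ((n:ℝ)+1)*αstar+1 := by ring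
        rwa [e] at h
      have e2 : ((m:ℝ)+1) * α₁ + ((n-m:ℕ):ℝ) * α₂ + 1
          = ((m:ℝ) * α₁ + ((n-m:ℕ):ℝ) * α₂ + 1) + α₁ := by ring
      rw [hrec1 m (n-m), norm_mul, Complex.norm_real, Real.norm_eq_abs, e2]
      have hgs : 0 < Real.Gamma ((m:ℝ) * α₁ + ((n-m:ℕ):ℝ) * α₂ + 1) :=
        Real.Gamma_pos_of_pos (by linarith)
      have hgsa : 0 < Real.Gamma (((m:ℝ) * α₁ + ((n-m:ℕ):ℝ) * α₂ + 1) + α₁) :=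
        Real.Gamma_pos_of_pos (by linarith)
      rw [abs_of_nonneg (le_of_lt (div_pos hgs hgsa))]
      have hinner : norm (a₁₁ * b1 m (n-m) + a₁₂ * b2 m (n-m)) ≤
          abar * (norm (b1 m (n-m)) + norm (b2 m (n-m))) := by
        calc norm (a₁₁ * b1 m (n-m) + a₁₂ * b2 m (n-m))
            ≤ norm (a₁₁ * b1 m (n-m)) + norm (a₁₂ * b2 m (n-m)) :=
              norm_add_le _ _
          _ = norm a₁₁ * norm (b1 m (n-m))
              + norm a₁₂ * norm (b2 m (n-m)) := by rw [norm_mul, norm_mul]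
          _ ≤ abar * norm (b1 m (n-m)) + abar * norm (b2 m (n-m)) :=
              add_le_add (mul_le_mul_of_nonneg_right ha11 (norm_nonneg _))
                (mul_le_mul_of_nonneg_right ha12 (norm_nonneg _))
          _ = abar * (norm (b1 m (n-m)) + norm (b2 m (n-m))) := by ring
      exact mul_le_mul hratio hinner (norm_nonneg _) hC0
    have hterm2 : ∀ m ∈ Finset.range (n+1),
        norm (b2 m (n-m+1)) ≤
          (Real.Gamma ((n:ℝ)*αstar+1) / Real.Gamma (((n:ℝ)+1)*αstar+1)) *
            (abar * (norm (b1 m (n-m)) + norm (b2 m (n-m)))) := by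
      intro m hm
      have hmn : m ≤ n := Nat.lt_succ_iff.mp (Finset.mem_range.mp hm)
      have hmr : (m:ℝ) ≤ (n:ℝ) := Nat.cast_le.2 hmn
      have hcast : ((n-m : ℕ) : ℝ) = (n:ℝ) - (m:ℝ) := by
        push_cast [hmn]; ring
      have h1nn : (0:ℝ) ≤ (m:ℝ) * α₁ := mul_nonneg (Nat.cast_nonneg _) hα₁0.le
      have h2nn : (0:ℝ) ≤ ((n-m:ℕ):ℝ) * α₂ := mul_nonneg (Nat.cast_nonneg _) hα₂0.le
      have hts : (n:ℝ)*αstar + 1 ≤ (m:ℝ) * α₁ + ((n-m:ℕ):ℝ) * α₂ + 1 := by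
        rw [hcast]
        have f1 : (m:ℝ) * αstar ≤ (m:ℝ) * α₁ :=
          mul_le_mul_of_nonneg_left hαs1 (Nat.cast_nonneg _)
        have f2 : ((n:ℝ)-(m:ℝ)) * αstar ≤ ((n:ℝ)-(m:ℝ)) * α₂ :=
          mul_le_mul_of_nonneg_left hαs2 (by linarith)
        nlinarith
      have hratio :
          Real.Gamma ((m:ℝ) * α₁ + ((n-m:ℕ):ℝ) * α₂ + 1) /
            Real.Gamma (((m:ℝ) * α₁ + ((n-m:ℕ):ℝ) * α₂ + 1) + α₂) ≤
          Real.Gamma ((n:ℝ)*αstar+1) / Real.Gamma (((n:ℝ)+1)*αstar+1) := by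
        have h := gamma_ratio_le ((n:ℝ)*αstar+1) ((m:ℝ) * α₁ + ((n-m:ℕ):ℝ) * α₂ + 1)
          α₂ αstar ht2 hts hαs0 hαs2
        have e : (n:ℝ)*αstar+1+αstar = ((n:ℝ)+1)*αstar+1 := by ring
        rwa [e] at h
      have e2 : (m:ℝ) * α₁ + (((n-m:ℕ):ℝ)+1) * α₂ + 1
          = ((m:ℝ) * α₁ + ((n-m:ℕ):ℝ) * α₂ + 1) + α₂ := by ring
      rw [hrec2 m (n-m), norm_mul, Complex.norm_real, Real.norm_eq_abs, e2]
      have hgs : 0 < Real.Gamma ((m:ℝ) * α₁ + ((n-m:ℕ):ℝ) * α₂ + 1) :=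
        Real.Gamma_pos_of_pos (by linarith)
      have hgsa : 0 < Real.Gamma (((m:ℝ) * α₁ + ((n-m:ℕ):ℝ) * α₂ + 1) + α₂) :=
        Real.Gamma_pos_of_pos (by linarith)
      rw [abs_of_nonneg (le_of_lt (div_pos hgs hgsa))]
      have hinner : norm (a₂₁ * b1 m (n-m) + a₂₂ * b2 m (n-m)) ≤
          abar * (norm (b1 m (n-m)) + norm (b2 m (n-m))) := by
        calc norm (a₂₁ * b1 m (n-m) + a₂₂ * b2 m (n-m))
            ≤ norm (a₂₁ * b1 m (n-m)) + norm (a₂₂ * b2 m (n-m)) :=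
              norm_add_le _ _
          _ = norm a₂₁ * norm (b1 m (n-m))
              + norm a₂₂ * norm (b2 m (n-m)) := by rw [norm_mul, norm_mul]
          _ ≤ abar * norm (b1 m (n-m)) + abar * norm (b2 m (n-m)) :=
              add_le_add (mul_le_mul_of_nonneg_right ha21 (norm_nonneg _))
                (mul_le_mul_of_nonneg_right ha22 (norm_nonneg _))
          _ = abar * (norm (b1 m (n-m)) + norm (b2 m (n-m))) := by ring
      exact mul_le_mul hratio hinner (norm_nonneg _) hC0
    have hsum1 : β1 (n+1) ≤
        (Real.Gamma ((n:ℝ)*αstar+1) / Real.Gamma (((n:ℝ)+1)*αstar+1)) *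
          (abar * (β1 n + β2 n)) := by
      calc β1 (n+1) = ∑ m ∈ Finset.range (n+1), norm (b1 (m+1) (n-m)) := by
            rw [hβ1 (n+1), Finset.sum_range_succ']
            simp [h10l (n+1) (by omega), Nat.succ_sub_succ]
        _ ≤ ∑ m ∈ Finset.range (n+1),
            (Real.Gamma ((n:ℝ)*αstar+1) / Real.Gamma (((n:ℝ)+1)*αstar+1)) *
              (abar * (norm (b1 m (n-m)) + norm (b2 m (n-m)))) :=
            Finset.sum_le_sum hterm1
        _ = (Real.Gamma ((n:ℝ)*αstar+1) / Real.Gamma (((n:ℝ)+1)*αstar+1)) *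
            (abar * (β1 n + β2 n)) := by
            rw [hβ1 n, hβ2 n, ← Finset.sum_add_distrib, ← Finset.mul_sum, ← Finset.mul_sum]
    have hsum2 : β2 (n+1) ≤
        (Real.Gamma ((n:ℝ)*αstar+1) / Real.Gamma (((n:ℝ)+1)*αstar+1)) *
          (abar * (β1 n + β2 n)) := by
      calc β2 (n+1) = ∑ m ∈ Finset.range (n+1), norm (b2 m (n+1-m)) := by
            rw [hβ2 (n+1), Finset.sum_range_succ, Nat.sub_self, h2k0 (n+1) (by omega)]
            simp
        _ = ∑ m ∈ Finset.range (n+1), norm (b2 m (n-m+1)) :=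
            Finset.sum_congr rfl (fun m hm => by
              have hmn : m ≤ n := Nat.lt_succ_iff.mp (Finset.mem_range.mp hm)
              have : n+1-m = n-m+1 := by omega
              rw [this])
        _ ≤ ∑ m ∈ Finset.range (n+1),
            (Real.Gamma ((n:ℝ)*αstar+1) / Real.Gamma (((n:ℝ)+1)*αstar+1)) *
              (abar * (norm (b1 m (n-m)) + norm (b2 m (n-m)))) :=
            Finset.sum_le_sum hterm2
        _ = (Real.Gamma ((n:ℝ)*αstar+1) / Real.Gamma (((n:ℝ)+1)*αstar+1)) *
            (abar * (β1 n + β2 n)) := by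
            rw [hβ1 n, hβ2 n, ← Finset.sum_add_distrib, ← Finset.mul_sum, ← Finset.mul_sum]
    calc β1 (n+1) + β2 (n+1)
        ≤ (Real.Gamma ((n:ℝ)*αstar+1) / Real.Gamma (((n:ℝ)+1)*αstar+1)) *
            (abar * (β1 n + β2 n))
          + (Real.Gamma ((n:ℝ)*αstar+1) / Real.Gamma (((n:ℝ)+1)*αstar+1)) *
            (abar * (β1 n + β2 n)) := add_le_add hsum1 hsum2
      _ = 2 * abar * (Real.Gamma ((n:ℝ)*αstar+1) / Real.Gamma (((n:ℝ)+1)*αstar+1))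
            * (β1 n + β2 n) := by ring
  refine ⟨N, ?_⟩
  intro k
  induction k with
  | zero =>
      have hg : Real.Gamma ((N:ℝ)*αstar+1) ≠ 0 :=
        (Real.Gamma_pos_of_pos (by linarith)).ne'
      simp only [Nat.add_zero, pow_zero, one_mul, Nat.cast_zero, add_zero]
      rw [div_self hg, one_mul]
  | succ k ih =>
      have h1 := hstep (N+k) (Nat.le_add_right N k)
      have hgNk0 : (0:ℝ) < ((N+k:ℕ):ℝ)*αstar + 1 := by
        have : (0:ℝ) ≤ ((N+k:ℕ):ℝ)*αstar := mul_nonneg (Nat.cast_nonneg _) hαs0.le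
        linarith
      have hg1 : (0:ℝ) < Real.Gamma (((N+k:ℕ):ℝ)*αstar+1) :=
        Real.Gamma_pos_of_pos hgNk0
      have hg2 : (0:ℝ) < Real.Gamma ((((N+k:ℕ):ℝ)+1)*αstar+1) :=
        Real.Gamma_pos_of_pos (by nlinarith)
      have hCnn : 0 ≤ Real.Gamma (((N+k:ℕ):ℝ)*αstar+1) /
          Real.Gamma ((((N+k:ℕ):ℝ)+1)*αstar+1) := le_of_lt (div_pos hg1 hg2)
      have harg : ((N:ℝ) + ((k+1:ℕ):ℝ))*αstar+1 = (((N+k:ℕ):ℝ)+1)*αstar+1 := by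
        push_cast; ring
      have harg2 : ((N:ℝ) + (k:ℝ))*αstar+1 = ((N+k:ℕ):ℝ)*αstar+1 := by
        push_cast; ring
      rw [harg]
      rw [harg2] at ih
      have ih' := mul_le_mul_of_nonneg_left ih
        (mul_nonneg (by linarith : (0:ℝ) ≤ 2*abar) hCnn)
      calc β1 (N+(k+1)) + β2 (N+(k+1))
          ≤ 2 * abar * (Real.Gamma (((N+k:ℕ):ℝ)*αstar+1) /
              Real.Gamma ((((N+k:ℕ):ℝ)+1)*αstar+1)) * (β1 (N+k) + β2 (N+k)) := h1
        _ ≤ 2 * abar * (Real.Gamma (((N+k:ℕ):ℝ)*αstar+1) /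
              Real.Gamma ((((N+k:ℕ):ℝ)+1)*αstar+1)) *
            ((2*abar)^k * Real.Gamma ((N:ℝ)*αstar+1) /
              Real.Gamma (((N+k:ℕ):ℝ)*αstar+1) * (β1 N + β2 N)) := by
            calc 2 * abar * (Real.Gamma (((N+k:ℕ):ℝ)*αstar+1) /
                  Real.Gamma ((((N+k:ℕ):ℝ)+1)*αstar+1)) * (β1 (N+k) + β2 (N+k))
                = 2 * abar * (Real.Gamma (((N+k:ℕ):ℝ)*αstar+1) /
                  Real.Gamma ((((N+k:ℕ):ℝ)+1)*αstar+1)) * (β1 (N+k) + β2 (N+k)) := rfl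
              _ ≤ _ := by
                  apply mul_le_mul_of_nonneg_left _ (mul_nonneg (by linarith) hCnn)
                  exact ih
        _ = (2*abar)^(k+1) * Real.Gamma ((N:ℝ)*αstar+1) /
              Real.Gamma ((((N+k:ℕ):ℝ)+1)*αstar+1) * (β1 N + β2 N) := by
            field_simp
            ring
end
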